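/- arXiv:1908.11713 — 3 statements merged into one kernel-verified Lean document; each statement's English description precedes it below -/
import Mathlib

section
/- Let {X_n, n ≥ 1} be a sequence of square-integrable real-valued random variables on a probability space, and suppose there exists a sequence of nonnegative constants {ρ_k, k ≥ 1} such that sup_{n ≥ 1} |Cov(X_n, X_{n+k})| ≤ ρ_k for every k ≥ 1. Let {b_n, n ≥ 1} be a sequence of positive reals such that n = O(b_n). Assume that Σ_{n=1}^{∞} Var(X_n)·(log n)² / b_n² < ∞ and that there exists q with 0 ≤ q < 1 such that Σ_{k=1}^{∞} ρ_k / k^q < ∞. Then the series Σ_{i=1}^{∞} (X_i − E[X_i]) / b_i converges almost surely. -/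
open MeasureTheory Filter

private lemma rm_aux (t : ℕ → ℝ) :
    ∀ l j N : ℕ, j * 2 ^ l ≤ N → N < (j + 1) * 2 ^ l →
      (t N - t (j * 2 ^ l)) ^ 2 ≤
        l * ∑ l' ∈ Finset.range l,
          ∑ j' ∈ Finset.Ico (j * 2 ^ (l - l')) ((j + 1) * 2 ^ (l - l')),
            (t ((j' + 1) * 2 ^ l') - t (j' * 2 ^ l')) ^ 2 := by
  intro l
  induction l with
  | zero =>
    intro j N h1 h2
    simp only [pow_zero, mul_one] at h1 h2
    have : N = j := by omega
    subst this
    simp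
  | succ l ih =>
    intro j N h1 h2
    set d : ℕ → ℕ → ℝ := fun l' j' => (t ((j' + 1) * 2 ^ l') - t (j' * 2 ^ l')) ^ 2 with hd
    set Ga : ℝ := ∑ l' ∈ Finset.range l,
        ∑ j' ∈ Finset.Ico (2 * j * 2 ^ (l - l')) ((2 * j + 1) * 2 ^ (l - l')), d l' j' with hGa
    set Gb : ℝ := ∑ l' ∈ Finset.range l,
        ∑ j' ∈ Finset.Ico ((2 * j + 1) * 2 ^ (l - l')) ((2 * j + 1 + 1) * 2 ^ (l - l')), d l' j'
      with hGb
    have hGa0 : 0 ≤ Ga :=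
      Finset.sum_nonneg fun _ _ => Finset.sum_nonneg fun _ _ => sq_nonneg _
    have hGb0 : 0 ≤ Gb :=
      Finset.sum_nonneg fun _ _ => Finset.sum_nonneg fun _ _ => sq_nonneg _
    -- split the big sum
    have hsplit : ∑ l' ∈ Finset.range (l + 1),
          ∑ j' ∈ Finset.Ico (j * 2 ^ (l + 1 - l')) ((j + 1) * 2 ^ (l + 1 - l')), d l' j'
        = Ga + Gb + (d l (2 * j) + d l (2 * j + 1)) := by
      rw [hGa, hGb, Finset.sum_range_succ, ← Finset.sum_add_distrib]
      congr 1
      · apply Finset.sum_congr rfl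
        intro l' hl'
        have hl'l : l' < l := Finset.mem_range.1 hl'
        have he : l + 1 - l' = (l - l') + 1 := by omega
        rw [he, pow_succ]
        have e1 : j * (2 ^ (l - l') * 2) = 2 * j * 2 ^ (l - l') := by ring
        have e2 : (j + 1) * (2 ^ (l - l') * 2) = (2 * j + 1 + 1) * 2 ^ (l - l') := by ring
        rw [e1, e2]
        rw [← Finset.sum_Ico_consecutive (fun j' => d l' j')
          (Nat.mul_le_mul_right _ (by omega) : 2 * j * 2 ^ (l - l') ≤ (2 * j + 1) * 2 ^ (l - l'))
          (Nat.mul_le_mul_right _ (by omega) :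
            (2 * j + 1) * 2 ^ (l - l') ≤ (2 * j + 1 + 1) * 2 ^ (l - l'))]
      · have he : l + 1 - l = 1 := by omega
        rw [he, pow_one]
        have e1 : j * 2 = 2 * j := by ring
        have e2 : (j + 1) * 2 = 2 * j + 1 + 1 := by ring
        rw [e1, e2]
        rw [Finset.sum_Ico_succ_top (by omega), Finset.sum_Ico_succ_top (by omega)]
        simp
    rw [hsplit]
    have hj1 : j * 2 ^ (l + 1) = 2 * j * 2 ^ l := by ring
    have hj2 : (j + 1) * 2 ^ (l + 1) = (2 * j + 1 + 1) * 2 ^ l := by ring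
    rw [hj1] at h1 ⊢
    rw [hj2] at h2
    have hl0 : (0:ℝ) ≤ (l:ℝ) := Nat.cast_nonneg l
    have hlp1 : (0:ℝ) ≤ (l:ℝ) + 1 := by linarith
    have hda : (0:ℝ) ≤ d l (2 * j) := sq_nonneg _
    have hdb : (0:ℝ) ≤ d l (2 * j + 1) := sq_nonneg _
    by_cases hN : N < (2 * j + 1) * 2 ^ l
    · have hb : (t N - t (2 * j * 2 ^ l)) ^ 2 ≤ (l:ℝ) * Ga := ih (2 * j) N h1 hN
      push_cast
      linarith [mul_nonneg hlp1 hGb0, mul_nonneg hlp1 hda, mul_nonneg hlp1 hdb]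
    · push_neg at hN
      have hbsq : (t N - t ((2 * j + 1) * 2 ^ l)) ^ 2 ≤ (l:ℝ) * Gb := ih (2 * j + 1) N hN h2
      set a : ℝ := t ((2 * j + 1) * 2 ^ l) - t (2 * j * 2 ^ l) with ha
      set bb : ℝ := t N - t ((2 * j + 1) * 2 ^ l) with hbb
      have hab : t N - t (2 * j * 2 ^ l) = a + bb := by rw [ha, hbb]; ring
      rw [hab]
      have hdaeq : d l (2 * j) = a ^ 2 := by rw [hd, ha]
      rw [hdaeq]
      rcases Nat.eq_zero_or_pos l with hl | hl
      · subst hl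
        have hb2 : bb ^ 2 ≤ 0 := by simpa using hbsq
        have hb0 : bb = 0 := by
          have := le_antisymm hb2 (sq_nonneg bb)
          exact pow_eq_zero_iff two_ne_zero |>.1 this
        rw [hb0]
        push_cast
        linarith
      have hl1 : (1:ℝ) ≤ (l:ℝ) := by exact_mod_cast hl
      have h5 : 0 ≤ ((l:ℝ) + 1) * ((l:ℝ) * Gb - bb ^ 2) :=
        mul_nonneg hlp1 (by linarith)
      have h6 : 0 ≤ ((l:ℝ) * a - bb) ^ 2 := sq_nonneg _
      have hgal : 0 ≤ (l:ℝ) * ((l:ℝ) + 1) * Ga := mul_nonneg (mul_nonneg hl0 hlp1) hGa0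
      have hdbl : 0 ≤ (l:ℝ) * ((l:ℝ) + 1) * d l (2 * j + 1) :=
        mul_nonneg (mul_nonneg hl0 hlp1) hdb
      have keyeq : (l:ℝ) * (((l:ℝ) + 1) * (Ga + Gb + (a ^ 2 + d l (2 * j + 1))) - (a + bb) ^ 2)
          = ((l:ℝ) * a - bb) ^ 2 + ((l:ℝ) + 1) * ((l:ℝ) * Gb - bb ^ 2)
            + (l:ℝ) * ((l:ℝ) + 1) * Ga + (l:ℝ) * ((l:ℝ) + 1) * d l (2 * j + 1) := by ring
      have key : 0 ≤ (l:ℝ) * (((l:ℝ) + 1) * (Ga + Gb + (a ^ 2 + d l (2 * j + 1)))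
          - (a + bb) ^ 2) := by rw [keyeq]; linarith
      push_cast
      nlinarith [key, hl1]

private lemma rm_cor (t : ℕ → ℝ) (n N : ℕ) (h1 : 2 ^ n ≤ N) (h2 : N ≤ 2 ^ (n + 1)) :
    (t N - t (2 ^ n)) ^ 2 ≤
      ((n : ℝ) + 1) * ((t (2 ^ (n + 1)) - t (2 ^ n)) ^ 2 +
        ∑ l ∈ Finset.range n, ∑ j ∈ Finset.Ico (2 ^ (n - l)) (2 ^ (n + 1 - l)),
          (t ((j + 1) * 2 ^ l) - t (j * 2 ^ l)) ^ 2) := by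
  have hn0 : (0:ℝ) ≤ (n:ℝ) := Nat.cast_nonneg n
  have hS0 : 0 ≤ ∑ l ∈ Finset.range n, ∑ j ∈ Finset.Ico (2 ^ (n - l)) (2 ^ (n + 1 - l)),
      (t ((j + 1) * 2 ^ l) - t (j * 2 ^ l)) ^ 2 :=
    Finset.sum_nonneg fun _ _ => Finset.sum_nonneg fun _ _ => sq_nonneg _
  have hF0 : (0:ℝ) ≤ (t (2 ^ (n + 1)) - t (2 ^ n)) ^ 2 := sq_nonneg _
  rcases eq_or_lt_of_le h2 with he | hlt
  · rw [he]
    nlinarith [mul_nonneg hn0 hF0, mul_nonneg hn0 hS0]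
  · have h := rm_aux t n 1 N (by simpa using h1)
      (by
        have : (1 + 1) * 2 ^ n = 2 ^ (n + 1) := by rw [pow_succ]; ring
        omega)
    rw [one_mul] at h
    have hsets : ∑ l' ∈ Finset.range n,
          ∑ j' ∈ Finset.Ico (1 * 2 ^ (n - l')) ((1 + 1) * 2 ^ (n - l')),
            (t ((j' + 1) * 2 ^ l') - t (j' * 2 ^ l')) ^ 2
        = ∑ l ∈ Finset.range n, ∑ j ∈ Finset.Ico (2 ^ (n - l)) (2 ^ (n + 1 - l)),
            (t ((j + 1) * 2 ^ l) - t (j * 2 ^ l)) ^ 2 := by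
      apply Finset.sum_congr rfl
      intro l' hl'
      have hl'n : l' < n := Finset.mem_range.1 hl'
      have e2 : (1 + 1) * 2 ^ (n - l') = 2 ^ (n + 1 - l') := by
        have hd : n + 1 - l' = (n - l') + 1 := by omega
        rw [hd, pow_succ]; ring
      rw [one_mul, e2]
    rw [hsets] at h
    set S := ∑ l ∈ Finset.range n, ∑ j ∈ Finset.Ico (2 ^ (n - l)) (2 ^ (n + 1 - l)),
        (t ((j + 1) * 2 ^ l) - t (j * 2 ^ l)) ^ 2
    linarith [mul_nonneg hn0 hF0]

private lemma sum_blocks (w : ℕ → ℝ) (c : ℕ) :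
    ∀ A B : ℕ, A ≤ B →
      ∑ j ∈ Finset.Ico A B, ∑ i ∈ Finset.Ioc (j * c) ((j + 1) * c), w i
        = ∑ i ∈ Finset.Ioc (A * c) (B * c), w i := by
  intro A B hAB
  induction B, hAB using Nat.le_induction with
  | base => simp
  | succ B hAB ih =>
    rw [Finset.sum_Ico_succ_top (by omega), ih,
      Finset.sum_Ioc_consecutive _ (Nat.mul_le_mul_right _ hAB)
        (Nat.mul_le_mul_right _ (by omega))]

private lemma sum_dyadic (g : ℕ → ℝ) :
    ∀ N : ℕ, ∑ n ∈ Finset.range N, ∑ i ∈ Finset.Ioc (2 ^ n) (2 ^ (n + 1)), g i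
      = ∑ i ∈ Finset.Ioc 1 (2 ^ N), g i := by
  intro N
  induction N with
  | zero => simp
  | succ N ih =>
    rw [Finset.sum_range_succ, ih,
      Finset.sum_Ioc_consecutive _ (Nat.one_le_two_pow) (Nat.pow_le_pow_right (by omega) (by omega))]

private lemma my_integrable_mul {Ω : Type*} [MeasurableSpace Ω] {μ : Measure Ω}
    {f g : Ω → ℝ} (hf : MemLp f 2 μ) (hg : MemLp g 2 μ) :
    Integrable (fun ω => f ω * g ω) μ := by
  have hint : Integrable (fun ω => (2⁻¹ : ℝ) * (f ω ^ 2 + g ω ^ 2)) μ :=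
    (hf.integrable_sq.add hg.integrable_sq).const_mul (2⁻¹ : ℝ)
  refine Integrable.mono' hint
    (hf.aestronglyMeasurable.mul hg.aestronglyMeasurable)
    (Filter.Eventually.of_forall fun ω => ?_)
  rw [Real.norm_eq_abs, abs_mul]
  nlinarith [sq_nonneg (|f ω| - |g ω|), sq_abs (f ω), sq_abs (g ω),
    abs_nonneg (f ω), abs_nonneg (g ω)]

private lemma summable_shift_rpow {p : ℝ} (hp : p < -1) :
    Summable (fun n : ℕ => ((n : ℝ) + 1) ^ p) := by
  have h : Summable (fun n : ℕ => ((n : ℝ)) ^ p) := Real.summable_nat_rpow.2 hp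
  have h2 := (_root_.summable_nat_add_iff (f := fun n : ℕ => ((n : ℝ)) ^ p) 1).2 h
  refine h2.congr fun n => ?_
  push_cast
  ring_nf

private lemma summable_rpow_log {q : ℝ} (hq : q < 1) :
    Summable (fun n : ℕ => ((n : ℝ) + 1) ^ (q - 2) * Real.log ((n : ℝ) + 1) ^ 2) := by
  set ε : ℝ := (1 - q) / 4 with hε
  have hε0 : 0 < ε := by rw [hε]; linarith
  have hp : q - 2 + 2 * ε < -1 := by rw [hε]; linarith
  have hs := (summable_shift_rpow hp).mul_left (1 / ε ^ 2)
  refine Summable.of_nonneg_of_le (fun n => ?_) (fun n => ?_) hs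
  · have h1 : (0:ℝ) < (n : ℝ) + 1 := by positivity
    have := Real.log_nonneg (by linarith : (1:ℝ) ≤ (n:ℝ) + 1)
    positivity
  · have h1 : (0:ℝ) < (n : ℝ) + 1 := by positivity
    have hlog := Real.log_le_rpow_div (le_of_lt h1) hε0
    have hlog0 := Real.log_nonneg (by linarith : (1:ℝ) ≤ (n:ℝ) + 1)
    have hsq : Real.log ((n : ℝ) + 1) ^ 2 ≤ (((n:ℝ) + 1) ^ ε / ε) ^ 2 := by
      apply pow_le_pow_left₀ hlog0 hlog 2
    have h2 : ((n : ℝ) + 1) ^ (q - 2) * Real.log ((n : ℝ) + 1) ^ 2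
        ≤ ((n : ℝ) + 1) ^ (q - 2) * ((((n:ℝ) + 1) ^ ε) ^ 2 / ε ^ 2) := by
      rw [div_pow] at hsq
      exact mul_le_mul_of_nonneg_left hsq (Real.rpow_nonneg (le_of_lt h1) _)
    refine h2.trans (le_of_eq ?_)
    rw [← Real.rpow_natCast (((n:ℝ) + 1) ^ ε) 2, ← Real.rpow_mul (le_of_lt h1)]
    rw [div_eq_mul_inv, ← mul_assoc, ← Real.rpow_add h1]
    rw [one_div]
    push_cast
    ring_nf

private lemma ae_summable_of_summable_integral {Ω : Type*} [MeasurableSpace Ω]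
    {μ : Measure Ω} {f : ℕ → Ω → ℝ}
    (hm : ∀ n, Integrable (f n) μ) (h0 : ∀ n ω, 0 ≤ f n ω)
    (hs : Summable fun n => ∫ ω, f n ω ∂μ) :
    ∀ᵐ ω ∂μ, Summable fun n => f n ω := by
  have hae : ∀ n, AEMeasurable (fun ω => ENNReal.ofReal (f n ω)) μ := fun n =>
    ENNReal.measurable_ofReal.comp_aemeasurable (hm n).aestronglyMeasurable.aemeasurable
  have hlt : ∫⁻ ω, ∑' n, ENNReal.ofReal (f n ω) ∂μ < ⊤ := by
    rw [MeasureTheory.lintegral_tsum hae]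
    have he : ∀ n, ∫⁻ ω, ENNReal.ofReal (f n ω) ∂μ = ENNReal.ofReal (∫ ω, f n ω ∂μ) := fun n =>
      (MeasureTheory.ofReal_integral_eq_lintegral_ofReal (hm n)
        (Filter.Eventually.of_forall (h0 n))).symm
    simp_rw [he]
    rw [← ENNReal.ofReal_tsum_of_nonneg (fun n => MeasureTheory.integral_nonneg (h0 n)) hs]
    exact ENNReal.ofReal_lt_top
  filter_upwards [MeasureTheory.ae_lt_top' (AEMeasurable.ennreal_tsum hae) hlt.ne] with ω hω
  have hsum := ENNReal.summable_toReal hω.ne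
  exact hsum.congr fun n => ENNReal.toReal_ofReal (h0 n ω)

set_option maxHeartbeats 1000000 in
/-- Hu–Li–Pan–Sung 2008; Theorem 5 of the paper's appendix,
first conclusion.
Let `{X_n, n ≥ 1}` be square-integrable random variables with
`sup_{n ≥ 1} |Cov(X_n, X_{n+k})| ≤ ρ_k` for all `k ≥ 1`, where `ρ_k ≥ 0`.
Let `b_n > 0` with `n = O(b_n)`.  If `∑_{n≥1} Var(X_n) (log n)^2 / b_n^2 < ∞` and
`∑_{k≥1} ρ_k / k^q < ∞` for some `0 ≤ q < 1`, then the series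
`∑_{i≥1} (X_i - E[X_i]) / b_i` converges almost surely. -/
theorem statement3
    {Ω : Type*} [MeasurableSpace Ω] (μ : Measure Ω) [IsProbabilityMeasure μ]
    (X : ℕ → Ω → ℝ) (hX : ∀ n, 1 ≤ n → MemLp (X n) 2 μ)
    (ρ : ℕ → ℝ) (hρ : ∀ k, 1 ≤ k → 0 ≤ ρ k)
    (hcov : ∀ k, 1 ≤ k → ∀ n, 1 ≤ n →
      |(∫ ω, X n ω * X (n + k) ω ∂μ)
        - (∫ ω, X n ω ∂μ) * (∫ ω, X (n + k) ω ∂μ)| ≤ ρ k)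
    (b : ℕ → ℝ) (hb : ∀ n, 1 ≤ n → 0 < b n)
    (hbO : ∃ K : ℝ, ∀ n : ℕ, 1 ≤ n → (n : ℝ) ≤ K * b n)
    (hvar : Summable (fun n : ℕ =>
      ((∫ ω, X (n + 1) ω ^ 2 ∂μ) - (∫ ω, X (n + 1) ω ∂μ) ^ 2)
        * Real.log (n + 1) ^ 2 / b (n + 1) ^ 2))
    (hq : ∃ q : ℝ, 0 ≤ q ∧ q < 1 ∧
      Summable (fun k : ℕ => ρ (k + 1) / ((k : ℝ) + 1) ^ q)) :
    ∀ᵐ ω ∂μ, ∃ L : ℝ, Tendsto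
      (fun N => ∑ i ∈ Finset.Icc 1 N, (X i ω - ∫ ω', X i ω' ∂μ) / b i)
      atTop (nhds L) := by
  obtain ⟨q, hq0, hq1, hqsum⟩ := hq
  obtain ⟨K, hK⟩ := hbO
  have hK0 : 0 < K := by
    have h1 := hK 1 le_rfl
    have hb1 := hb 1 le_rfl
    push_cast at h1
    nlinarith
  set m : ℕ → ℝ := fun i => ∫ ω, X i ω ∂μ with hm
  set Y : ℕ → Ω → ℝ := fun i ω => (X i ω - m i) / b i with hY
  set S : ℕ → Ω → ℝ := fun N ω => ∑ i ∈ Finset.Ioc 0 N, Y i ω with hS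
  set C : ℝ := ∑' k : ℕ, ρ (k + 1) / ((k : ℝ) + 1) ^ q with hC
  have hC0 : 0 ≤ C := tsum_nonneg fun k =>
    div_nonneg (hρ _ (by omega)) (Real.rpow_nonneg (by positivity) q)
  set v : ℕ → ℝ := fun i => ∫ ω, (Y i ω) ^ 2 ∂μ with hv
  have hv0 : ∀ i, 0 ≤ v i := fun i => integral_nonneg fun ω => sq_nonneg _
  set w : ℕ → ℝ := fun i => 2 * v i + 2 * K ^ 2 * C * ((i : ℝ)) ^ (q - 2) with hw
  have hw0 : ∀ i : ℕ, 0 ≤ w i := by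
    intro i
    have h1 : (0:ℝ) ≤ ((i:ℝ)) ^ (q - 2) := Real.rpow_nonneg (Nat.cast_nonneg i) _
    have h2 := hv0 i
    have h3 : (0:ℝ) ≤ 2 * K ^ 2 * C := by positivity
    have h4 := mul_nonneg h3 h1
    rw [hw]
    dsimp only
    linarith
  -- basic properties of Y
  have hYm : ∀ i, 1 ≤ i → MemLp (Y i) 2 μ := by
    intro i hi
    have h1 : MemLp (fun ω => X i ω - m i) 2 μ := (hX i hi).sub (memLp_const _)
    have h2 := h1.const_mul (b i)⁻¹
    rw [hY]
    simpa [div_eq_inv_mul] using h2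
  have hYi : ∀ i, 1 ≤ i → Integrable (Y i) μ :=
    fun i hi => (hYm i hi).integrable one_le_two
  have hYmul : ∀ i j, 1 ≤ i → 1 ≤ j → Integrable (fun ω => Y i ω * Y j ω) μ :=
    fun i j hi hj => my_integrable_mul (hYm i hi) (hYm j hj)
  -- covariance bound
  have hcovY : ∀ i j : ℕ, 1 ≤ i → i < j →
      |∫ ω, Y i ω * Y j ω ∂μ|
        ≤ K ^ 2 * (ρ (j - i) / ((j - i : ℕ) : ℝ) ^ q) * (i : ℝ) ^ (q - 2) := by
    intro i j hi hij
    have hj : 1 ≤ j := by omega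
    have hbi := hb i hi
    have hbj := hb j hj
    have hi0 : (0:ℝ) < (i:ℝ) := by exact_mod_cast hi
    have hj0 : (0:ℝ) < (j:ℝ) := by exact_mod_cast hj
    set k := j - i with hk
    have hk1 : 1 ≤ k := by omega
    have hk0 : (0:ℝ) < (k:ℝ) := by exact_mod_cast hk1
    have hρk := hρ k hk1
    have hXi := (hX i hi).integrable one_le_two
    have hXj := (hX j hj).integrable one_le_two
    have hXij := my_integrable_mul (hX i hi) (hX j hj)
    have hcent : ∫ ω, (X i ω - m i) * (X j ω - m j) ∂μ
        = (∫ ω, X i ω * X j ω ∂μ) - m i * m j := by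
      have hI1 : Integrable (fun ω => m i * X j ω) μ := hXj.const_mul (m i)
      have hI2 : Integrable (fun ω => m j * X i ω - m i * m j) μ :=
        (hXi.const_mul (m j)).sub (integrable_const _)
      have hI3 : Integrable (fun ω => X i ω * X j ω - m i * X j ω) μ := hXij.sub hI1
      have hI4 : Integrable (fun ω => m j * X i ω) μ := hXi.const_mul (m j)
      have e1 : ∫ ω, (X i ω - m i) * (X j ω - m j) ∂μ
          = ∫ ω, (X i ω * X j ω - m i * X j ω) - (m j * X i ω - m i * m j) ∂μ := by
        congr 1
        funext ω
        ring
      rw [e1, integral_sub hI3 hI2, integral_sub hXij hI1,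
        integral_sub hI4 (integrable_const _), integral_const_mul, integral_const_mul,
        integral_const]
      simp only [measure_univ, probReal_univ, ENNReal.toReal_one, smul_eq_mul, one_mul, mul_one]
      ring
    have hYptw : ∀ ω, Y i ω * Y j ω
        = ((X i ω - m i) * (X j ω - m j)) * ((b i)⁻¹ * (b j)⁻¹) := by
      intro ω
      rw [hY]
      field_simp
    have hYint : ∫ ω, Y i ω * Y j ω ∂μ
        = ((∫ ω, X i ω * X j ω ∂μ) - m i * m j) * ((b i)⁻¹ * (b j)⁻¹) := by
      simp_rw [hYptw]
      rw [integral_mul_const, hcent]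
    have hik : i + k = j := by omega
    have hcov1 : |(∫ ω, X i ω * X j ω ∂μ) - m i * m j| ≤ ρ k := by
      have h := hcov k hk1 i hi
      rw [hik] at h
      exact h
    have habs : |∫ ω, Y i ω * Y j ω ∂μ| ≤ ρ k * ((b i)⁻¹ * (b j)⁻¹) := by
      rw [hYint, abs_mul]
      have h2 : |(b i)⁻¹ * (b j)⁻¹| = (b i)⁻¹ * (b j)⁻¹ := abs_of_pos (by positivity)
      rw [h2]
      exact mul_le_mul_of_nonneg_right hcov1 (by positivity)
    have hij_le : (i:ℝ) * (j:ℝ) ≤ K ^ 2 * (b i * b j) := by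
      have h1 := hK i hi
      have h2 := hK j hj
      nlinarith
    have h3 : (b i * b j)⁻¹ ≤ K ^ 2 / ((i:ℝ) * (j:ℝ)) := by
      rw [inv_eq_one_div, div_le_div_iff₀ (by positivity) (by positivity)]
      nlinarith [hij_le]
    have hbb : ρ k * ((b i)⁻¹ * (b j)⁻¹) ≤ ρ k * (K ^ 2 / ((i:ℝ) * (j:ℝ))) := by
      rw [← mul_inv]
      exact mul_le_mul_of_nonneg_left h3 hρk
    have hjlk : (j:ℝ) = (i:ℝ) + (k:ℝ) := by
      rw [← hik]
      push_cast
      ring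
    have hpow : (i:ℝ) ^ (2 - q) * (k:ℝ) ^ q ≤ (i:ℝ) * (j:ℝ) := by
      have h1 : (i:ℝ) ^ (1 - q) ≤ (j:ℝ) ^ (1 - q) :=
        Real.rpow_le_rpow hi0.le (by rw [hjlk]; linarith) (by linarith)
      have h2 : (k:ℝ) ^ q ≤ (j:ℝ) ^ q :=
        Real.rpow_le_rpow hk0.le (by rw [hjlk]; linarith) hq0
      have hmul : (i:ℝ) ^ (1 - q) * (k:ℝ) ^ q ≤ (j:ℝ) ^ (1 - q) * (j:ℝ) ^ q :=
        mul_le_mul h1 h2 (Real.rpow_nonneg hk0.le q) (Real.rpow_nonneg hj0.le _)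
      have hj1 : (j:ℝ) ^ (1 - q) * (j:ℝ) ^ q = (j:ℝ) := by
        rw [← Real.rpow_add hj0]
        norm_num
      have hi2 : (i:ℝ) ^ (2 - q) = (i:ℝ) * (i:ℝ) ^ (1 - q) := by
        rw [show (2 - q) = 1 + (1 - q) by ring, Real.rpow_add hi0, Real.rpow_one]
      rw [hi2, mul_assoc]
      apply mul_le_mul_of_nonneg_left _ hi0.le
      rw [← hj1]
      exact hmul
    have hstepB : ρ k * (K ^ 2 / ((i:ℝ) * (j:ℝ)))
        ≤ K ^ 2 * (ρ k / (k:ℝ) ^ q) * (i:ℝ) ^ (q - 2) := by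
      have hc0 : (0:ℝ) < (i:ℝ) ^ (2 - q) * (k:ℝ) ^ q := by positivity
      have hdd := div_le_div_of_nonneg_left
        (mul_nonneg (by positivity : (0:ℝ) ≤ K ^ 2) hρk) hc0 hpow
      calc ρ k * (K ^ 2 / ((i:ℝ) * (j:ℝ))) = K ^ 2 * ρ k / ((i:ℝ) * (j:ℝ)) := by ring
        _ ≤ K ^ 2 * ρ k / ((i:ℝ) ^ (2 - q) * (k:ℝ) ^ q) := hdd
        _ = K ^ 2 * (ρ k / (k:ℝ) ^ q) * (i:ℝ) ^ (q - 2) := by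
            rw [show q - 2 = -(2 - q) by ring, Real.rpow_neg hi0.le]
            simp only [div_eq_mul_inv, mul_inv]
            ring
    exact habs.trans (hbb.trans hstepB)
  -- sum over j > i of covariances
  have hsumj : ∀ i : ℕ, 1 ≤ i → ∀ F : Finset ℕ,
      ∑ j ∈ F.filter (fun j => i < j), |∫ ω, Y i ω * Y j ω ∂μ|
        ≤ K ^ 2 * C * (i : ℝ) ^ (q - 2) := by
    intro i hi F
    have hterm : ∀ j ∈ F.filter (fun j => i < j), |∫ ω, Y i ω * Y j ω ∂μ|
        ≤ K ^ 2 * (ρ (j - i) / ((j - i : ℕ) : ℝ) ^ q) * (i:ℝ) ^ (q - 2) := fun j hj =>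
      hcovY i j hi (Finset.mem_filter.1 hj).2
    calc ∑ j ∈ F.filter (fun j => i < j), |∫ ω, Y i ω * Y j ω ∂μ|
        ≤ ∑ j ∈ F.filter (fun j => i < j),
            K ^ 2 * (ρ (j - i) / ((j - i : ℕ) : ℝ) ^ q) * (i:ℝ) ^ (q - 2) :=
          Finset.sum_le_sum hterm
      _ = (K ^ 2 * (i:ℝ) ^ (q - 2)) *
            ∑ j ∈ F.filter (fun j => i < j), ρ (j - i) / ((j - i : ℕ) : ℝ) ^ q := by
          rw [Finset.mul_sum]
          exact Finset.sum_congr rfl fun j _ => by ring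
      _ ≤ (K ^ 2 * (i:ℝ) ^ (q - 2)) * C := by
          refine mul_le_mul_of_nonneg_left ?_ (by positivity)
          have himg : ∑ j ∈ F.filter (fun j => i < j), ρ (j - i) / ((j - i : ℕ) : ℝ) ^ q
              = ∑ n ∈ (F.filter (fun j => i < j)).image (fun j => j - (i + 1)),
                  ρ (n + 1) / ((n:ℝ) + 1) ^ q := by
            rw [Finset.sum_image (by
              intro x hx y hy hxy
              have hx' : i < x := (Finset.mem_filter.1 hx).2
              have hy' : i < y := (Finset.mem_filter.1 hy).2
              simp only at hxy
              omega)]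
            refine Finset.sum_congr rfl fun j hj => ?_
            have hj' : i < j := (Finset.mem_filter.1 hj).2
            have h2 : j - (i + 1) + 1 = j - i := by omega
            have h3 : ((j - i : ℕ):ℝ) = ((j - (i + 1) : ℕ):ℝ) + 1 := by
              rw [← h2]
              push_cast
              ring
            rw [h2, h3]
          rw [himg, hC]
          refine hqsum.sum_le_tsum _ (fun n _ => ?_)
          exact div_nonneg (hρ _ (by omega)) (Real.rpow_nonneg (by positivity) q)
      _ = K ^ 2 * C * (i:ℝ) ^ (q - 2) := by ring
  -- key second-moment bound for block sums
  have hkey : ∀ a Bn : ℕ,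
      ∫ ω, (∑ i ∈ Finset.Ioc a Bn, Y i ω) ^ 2 ∂μ ≤ ∑ i ∈ Finset.Ioc a Bn, w i := by
    intro a Bn
    have hmem : ∀ i ∈ Finset.Ioc a Bn, 1 ≤ i := fun i hi => by
      have := Finset.mem_Ioc.1 hi
      omega
    have hexp : ∫ ω, (∑ i ∈ Finset.Ioc a Bn, Y i ω) ^ 2 ∂μ
        = ∑ i ∈ Finset.Ioc a Bn, ∑ j ∈ Finset.Ioc a Bn, ∫ ω, Y i ω * Y j ω ∂μ := by
      have h1 : ∀ ω, (∑ i ∈ Finset.Ioc a Bn, Y i ω) ^ 2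
          = ∑ i ∈ Finset.Ioc a Bn, ∑ j ∈ Finset.Ioc a Bn, Y i ω * Y j ω := by
        intro ω
        rw [sq, Finset.sum_mul_sum]
      simp_rw [h1]
      rw [integral_finset_sum _ fun i hi =>
        integrable_finset_sum _ fun j hj => hYmul i j (hmem i hi) (hmem j hj)]
      exact Finset.sum_congr rfl fun i hi =>
        integral_finset_sum _ fun j hj => hYmul i j (hmem i hi) (hmem j hj)
    rw [hexp]
    set D : ℕ → ℕ → ℝ := fun i j =>
      (if i < j then |∫ ω, Y i ω * Y j ω ∂μ| else 0) + (if i = j then v i else 0) with hD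
    have hDle : ∀ i ∈ Finset.Ioc a Bn, ∀ j ∈ Finset.Ioc a Bn,
        ∫ ω, Y i ω * Y j ω ∂μ ≤ D i j + D j i := by
      intro i _ j _
      rcases lt_trichotomy i j with h | h | h
      · rw [hD]
        simp only [if_pos h, if_neg h.ne, if_neg (lt_asymm h), if_neg h.ne']
        have := le_abs_self (∫ ω, Y i ω * Y j ω ∂μ)
        linarith
      · subst h
        have heq : ∫ ω, Y i ω * Y i ω ∂μ = v i := by
          rw [hv]
          dsimp only
          congr 1
          funext ω
          ring
        have hDii : D i i = v i := by
          rw [hD]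
          simp
        rw [heq, hDii]
        linarith [hv0 i]
      · rw [hD]
        simp only [if_neg (lt_asymm h), if_neg (ne_of_gt h), if_pos h, if_neg (ne_of_lt h)]
        have hcomm : (fun ω => Y i ω * Y j ω) = fun ω => Y j ω * Y i ω :=
          funext fun ω => mul_comm _ _
        rw [hcomm]
        have := le_abs_self (∫ ω, Y j ω * Y i ω ∂μ)
        linarith
    have hstep : ∑ i ∈ Finset.Ioc a Bn, ∑ j ∈ Finset.Ioc a Bn, ∫ ω, Y i ω * Y j ω ∂μ
        ≤ ∑ i ∈ Finset.Ioc a Bn, ∑ j ∈ Finset.Ioc a Bn, (D i j + D j i) :=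
      Finset.sum_le_sum fun i hi => Finset.sum_le_sum fun j hj => hDle i hi j hj
    have hsplit2 : ∑ i ∈ Finset.Ioc a Bn, ∑ j ∈ Finset.Ioc a Bn, (D i j + D j i)
        = ∑ i ∈ Finset.Ioc a Bn, ∑ j ∈ Finset.Ioc a Bn, D i j
          + ∑ i ∈ Finset.Ioc a Bn, ∑ j ∈ Finset.Ioc a Bn, D j i := by
      rw [← Finset.sum_add_distrib]
      exact Finset.sum_congr rfl fun i _ => Finset.sum_add_distrib
    have hcomm2 : ∑ i ∈ Finset.Ioc a Bn, ∑ j ∈ Finset.Ioc a Bn, D j i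
        = ∑ i ∈ Finset.Ioc a Bn, ∑ j ∈ Finset.Ioc a Bn, D i j := Finset.sum_comm
    have hrow : ∀ i ∈ Finset.Ioc a Bn,
        ∑ j ∈ Finset.Ioc a Bn, D i j ≤ v i + K ^ 2 * C * (i:ℝ) ^ (q - 2) := by
      intro i hi
      rw [hD]
      dsimp only
      rw [Finset.sum_add_distrib]
      have h1 : ∑ j ∈ Finset.Ioc a Bn, (if i < j then |∫ ω, Y i ω * Y j ω ∂μ| else 0)
          = ∑ j ∈ (Finset.Ioc a Bn).filter (fun j => i < j), |∫ ω, Y i ω * Y j ω ∂μ| :=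
        (Finset.sum_filter _ _).symm
      have h2 : ∑ j ∈ Finset.Ioc a Bn, (if i = j then v i else 0) ≤ v i := by
        rw [Finset.sum_ite_eq]
        have := hv0 i
        split <;> linarith
      rw [h1]
      have h3 := hsumj i (hmem i hi) (Finset.Ioc a Bn)
      linarith
    calc ∑ i ∈ Finset.Ioc a Bn, ∑ j ∈ Finset.Ioc a Bn, ∫ ω, Y i ω * Y j ω ∂μ
        ≤ ∑ i ∈ Finset.Ioc a Bn, ∑ j ∈ Finset.Ioc a Bn, (D i j + D j i) := hstep
      _ = 2 * ∑ i ∈ Finset.Ioc a Bn, ∑ j ∈ Finset.Ioc a Bn, D i j := by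
          rw [hsplit2, hcomm2]
          ring
      _ ≤ 2 * ∑ i ∈ Finset.Ioc a Bn, (v i + K ^ 2 * C * (i:ℝ) ^ (q - 2)) := by
          have := Finset.sum_le_sum hrow
          linarith
      _ = ∑ i ∈ Finset.Ioc a Bn, w i := by
          rw [Finset.mul_sum]
          refine Finset.sum_congr rfl fun i _ => ?_
          rw [hw]
          dsimp only
          ring
  -- S-differences
  have hSdiff : ∀ a Bn : ℕ, a ≤ Bn → ∀ ω, S Bn ω - S a ω = ∑ i ∈ Finset.Ioc a Bn, Y i ω := by
    intro a Bn h ω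
    rw [hS]
    dsimp only
    rw [← Finset.sum_Ioc_consecutive (fun i => Y i ω) (Nat.zero_le a) h]
    ring
  have hkeyS : ∀ a Bn : ℕ, a ≤ Bn →
      ∫ ω, (S Bn ω - S a ω) ^ 2 ∂μ ≤ ∑ i ∈ Finset.Ioc a Bn, w i := by
    intro a Bn h
    have he : (fun ω => (S Bn ω - S a ω) ^ 2)
        = fun ω => (∑ i ∈ Finset.Ioc a Bn, Y i ω) ^ 2 :=
      funext fun ω => by rw [hSdiff a Bn h ω]
    calc ∫ ω, (S Bn ω - S a ω) ^ 2 ∂μ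
        = ∫ ω, (∑ i ∈ Finset.Ioc a Bn, Y i ω) ^ 2 ∂μ := by rw [he]
      _ ≤ ∑ i ∈ Finset.Ioc a Bn, w i := hkey a Bn
  have hblockMem : ∀ a Bn : ℕ, MemLp (fun ω => ∑ i ∈ Finset.Ioc a Bn, Y i ω) 2 μ := by
    intro a Bn
    apply memLp_finset_sum
    intro i hi
    exact hYm i (by have := Finset.mem_Ioc.1 hi; omega)
  have hSdiffMem : ∀ a Bn : ℕ, a ≤ Bn → MemLp (fun ω => S Bn ω - S a ω) 2 μ := by
    intro a Bn h
    have he : (fun ω => S Bn ω - S a ω) = fun ω => ∑ i ∈ Finset.Ioc a Bn, Y i ω :=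
      funext fun ω => hSdiff a Bn h ω
    rw [he]
    exact hblockMem a Bn
  have hSqInt : ∀ a Bn : ℕ, a ≤ Bn → Integrable (fun ω => (S Bn ω - S a ω) ^ 2) μ :=
    fun a Bn h => (hSdiffMem a Bn h).integrable_sq
  have hpow_le : ∀ n : ℕ, (2:ℕ) ^ n ≤ 2 ^ (n + 1) :=
    fun n => Nat.pow_le_pow_right (by norm_num) (by omega)
  -- the maximal quantity
  set A : ℕ → ℝ := fun n => ∑ i ∈ Finset.Ioc (2 ^ n) (2 ^ (n + 1)), w i with hA
  have hA0 : ∀ n, 0 ≤ A n := fun n => Finset.sum_nonneg fun i _ => hw0 i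
  set Rf : ℕ → Ω → ℝ := fun n ω => ((n:ℝ) + 1) * ((S (2 ^ (n + 1)) ω - S (2 ^ n) ω) ^ 2 +
      ∑ l ∈ Finset.range n, ∑ j ∈ Finset.Ico (2 ^ (n - l)) (2 ^ (n + 1 - l)),
        (S ((j + 1) * 2 ^ l) ω - S (j * 2 ^ l) ω) ^ 2) with hRf
  have hRf0 : ∀ n ω, 0 ≤ Rf n ω := by
    intro n ω
    rw [hRf]
    dsimp only
    have h1 : (0:ℝ) ≤ (S (2 ^ (n + 1)) ω - S (2 ^ n) ω) ^ 2 := sq_nonneg _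
    have h2 : (0:ℝ) ≤ ∑ l ∈ Finset.range n, ∑ j ∈ Finset.Ico (2 ^ (n - l)) (2 ^ (n + 1 - l)),
        (S ((j + 1) * 2 ^ l) ω - S (j * 2 ^ l) ω) ^ 2 :=
      Finset.sum_nonneg fun _ _ => Finset.sum_nonneg fun _ _ => sq_nonneg _
    have h3 : (0:ℝ) ≤ (n:ℝ) + 1 := by positivity
    exact mul_nonneg h3 (add_nonneg h1 h2)
  have hRfInt : ∀ n, Integrable (Rf n) μ := by
    intro n
    rw [hRf]
    apply Integrable.const_mul
    apply Integrable.add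
    · exact hSqInt _ _ (hpow_le n)
    · apply integrable_finset_sum
      intro l hl
      apply integrable_finset_sum
      intro j hj
      exact hSqInt _ _ (Nat.mul_le_mul_right _ (by omega))
  have hRfBound : ∀ n, ∫ ω, Rf n ω ∂μ ≤ ((n:ℝ) + 1) ^ 2 * A n := by
    intro n
    have hIfull : Integrable (fun ω => (S (2 ^ (n + 1)) ω - S (2 ^ n) ω) ^ 2) μ :=
      hSqInt _ _ (hpow_le n)
    have hIin : ∀ l ∈ Finset.range n, Integrable (fun ω =>
        ∑ j ∈ Finset.Ico (2 ^ (n - l)) (2 ^ (n + 1 - l)),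
          (S ((j + 1) * 2 ^ l) ω - S (j * 2 ^ l) ω) ^ 2) μ := by
      intro l _
      apply integrable_finset_sum
      intro j hj
      exact hSqInt _ _ (Nat.mul_le_mul_right _ (by omega))
    have hIsum : Integrable (fun ω => ∑ l ∈ Finset.range n,
        ∑ j ∈ Finset.Ico (2 ^ (n - l)) (2 ^ (n + 1 - l)),
          (S ((j + 1) * 2 ^ l) ω - S (j * 2 ^ l) ω) ^ 2) μ :=
      integrable_finset_sum _ hIin
    have hintRf : ∫ ω, Rf n ω ∂μ = ((n:ℝ) + 1) *
        ((∫ ω, (S (2 ^ (n + 1)) ω - S (2 ^ n) ω) ^ 2 ∂μ) +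
          ∑ l ∈ Finset.range n, ∑ j ∈ Finset.Ico (2 ^ (n - l)) (2 ^ (n + 1 - l)),
            ∫ ω, (S ((j + 1) * 2 ^ l) ω - S (j * 2 ^ l) ω) ^ 2 ∂μ) := by
      rw [hRf]
      dsimp only
      rw [integral_const_mul]
      congr 1
      rw [integral_add hIfull hIsum]
      congr 1
      rw [integral_finset_sum _ hIin]
      refine Finset.sum_congr rfl fun l _ => ?_
      rw [integral_finset_sum _ fun j hj => hSqInt _ _ (Nat.mul_le_mul_right _ (by omega))]
    have hlev : ∀ l ∈ Finset.range n,
        ∑ j ∈ Finset.Ico (2 ^ (n - l)) (2 ^ (n + 1 - l)),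
          ∫ ω, (S ((j + 1) * 2 ^ l) ω - S (j * 2 ^ l) ω) ^ 2 ∂μ ≤ A n := by
      intro l hl
      have hln : l ≤ n := le_of_lt (Finset.mem_range.1 hl)
      have h1 : ∀ j ∈ Finset.Ico (2 ^ (n - l)) (2 ^ (n + 1 - l)),
          ∫ ω, (S ((j + 1) * 2 ^ l) ω - S (j * 2 ^ l) ω) ^ 2 ∂μ
            ≤ ∑ i ∈ Finset.Ioc (j * 2 ^ l) ((j + 1) * 2 ^ l), w i :=
        fun j _ => hkeyS _ _ (Nat.mul_le_mul_right _ (by omega))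
      calc ∑ j ∈ Finset.Ico (2 ^ (n - l)) (2 ^ (n + 1 - l)),
            ∫ ω, (S ((j + 1) * 2 ^ l) ω - S (j * 2 ^ l) ω) ^ 2 ∂μ
          ≤ ∑ j ∈ Finset.Ico (2 ^ (n - l)) (2 ^ (n + 1 - l)),
              ∑ i ∈ Finset.Ioc (j * 2 ^ l) ((j + 1) * 2 ^ l), w i := Finset.sum_le_sum h1
        _ = ∑ i ∈ Finset.Ioc (2 ^ (n - l) * 2 ^ l) (2 ^ (n + 1 - l) * 2 ^ l), w i :=
            sum_blocks w (2 ^ l) _ _ (Nat.pow_le_pow_right (by norm_num) (by omega))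
        _ = A n := by
            rw [pow_sub_mul_pow 2 hln, pow_sub_mul_pow 2 (by omega : l ≤ n + 1), hA]
    have hfull2 : ∫ ω, (S (2 ^ (n + 1)) ω - S (2 ^ n) ω) ^ 2 ∂μ ≤ A n := by
      rw [hA]
      exact hkeyS _ _ (hpow_le n)
    have hsum2 : ∑ l ∈ Finset.range n, ∑ j ∈ Finset.Ico (2 ^ (n - l)) (2 ^ (n + 1 - l)),
        ∫ ω, (S ((j + 1) * 2 ^ l) ω - S (j * 2 ^ l) ω) ^ 2 ∂μ ≤ (n:ℝ) * A n := by
      have h2 := Finset.sum_le_card_nsmul _ _ (A n) hlev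
      rw [Finset.card_range] at h2
      rw [nsmul_eq_mul] at h2
      exact h2
    rw [hintRf]
    have hn0 : (0:ℝ) ≤ (n:ℝ) + 1 := by positivity
    have := mul_le_mul_of_nonneg_left (add_le_add hfull2 hsum2) hn0
    calc ((n:ℝ) + 1) * ((∫ ω, (S (2 ^ (n + 1)) ω - S (2 ^ n) ω) ^ 2 ∂μ) +
          ∑ l ∈ Finset.range n, ∑ j ∈ Finset.Ico (2 ^ (n - l)) (2 ^ (n + 1 - l)),
            ∫ ω, (S ((j + 1) * 2 ^ l) ω - S (j * 2 ^ l) ω) ^ 2 ∂μ)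
        ≤ ((n:ℝ) + 1) * (A n + (n:ℝ) * A n) := this
      _ = ((n:ℝ) + 1) ^ 2 * A n := by ring
  -- variance identity and summability
  have hveq : ∀ i, 1 ≤ i → v i = ((∫ ω, X i ω ^ 2 ∂μ) - m i ^ 2) / b i ^ 2 := by
    intro i hi
    have hbi := hb i hi
    have hXi := (hX i hi).integrable one_le_two
    have hXsq : Integrable (fun ω => X i ω ^ 2) μ := (hX i hi).integrable_sq
    have hI5 : Integrable (fun ω => 2 * m i * X i ω) μ := hXi.const_mul _
    have hI6 : Integrable (fun ω => X i ω ^ 2 - 2 * m i * X i ω) μ := hXsq.sub hI5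
    rw [hv]
    dsimp only
    have e1 : ∀ ω, (Y i ω) ^ 2 = (X i ω ^ 2 - 2 * m i * X i ω + m i ^ 2) * (b i ^ 2)⁻¹ := by
      intro ω
      rw [hY]
      dsimp only
      field_simp
      ring
    simp_rw [e1]
    rw [integral_mul_const, div_eq_mul_inv]
    congr 1
    have e2 : ∫ ω, X i ω ^ 2 - 2 * m i * X i ω + m i ^ 2 ∂μ
        = ∫ ω, (X i ω ^ 2 - 2 * m i * X i ω) + m i ^ 2 ∂μ := rfl
    rw [e2, integral_add hI6 (integrable_const _), integral_sub hXsq hI5,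
      integral_const_mul, integral_const]
    simp only [measure_univ, probReal_univ, ENNReal.toReal_one, smul_eq_mul, one_mul, mul_one]
    ring
  have hVsum : Summable (fun n : ℕ => v (n + 1) * Real.log ((n:ℝ) + 1) ^ 2) := by
    refine hvar.congr fun n => ?_
    rw [hveq (n + 1) (by omega), hm]
    dsimp only
    ring
  have hWlog : Summable (fun n : ℕ => w (n + 1) * Real.log ((n:ℝ) + 1) ^ 2) := by
    have h1 := (hVsum.mul_left 2).add ((summable_rpow_log hq1).mul_left (2 * K ^ 2 * C))
    refine h1.congr fun n => ?_
    rw [hw]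
    dsimp only
    push_cast
    ring
  -- summability of (n+1)^2 A n
  set c0 : ℝ := (2 / Real.log 2) ^ 2 with hc0
  have hlog2 : 0 < Real.log 2 := Real.log_pos (by norm_num)
  have hnlog : ∀ n i : ℕ, 2 ^ n < i → ((n:ℝ) + 1) ^ 2 ≤ c0 * Real.log (i:ℝ) ^ 2 := by
    intro n i hni
    have hi2 : (2:ℝ) ^ n < (i:ℝ) := by exact_mod_cast hni
    have hi1 : (2:ℝ) ≤ (i:ℝ) := by
      have h4 : (2:ℕ) ≤ i := by
        have := Nat.one_le_two_pow (n := n)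
        omega
      exact_mod_cast h4
    have hlogi : Real.log 2 ≤ Real.log (i:ℝ) := Real.log_le_log (by norm_num) hi1
    have hlogn : (n:ℝ) * Real.log 2 ≤ Real.log (i:ℝ) := by
      calc (n:ℝ) * Real.log 2 = Real.log ((2:ℝ) ^ n) := by rw [Real.log_pow]
        _ ≤ Real.log (i:ℝ) := Real.log_le_log (by positivity) hi2.le
    have h1 : ((n:ℝ) + 1) * Real.log 2 ≤ 2 * Real.log (i:ℝ) := by linarith
    have h2 : (0:ℝ) ≤ ((n:ℝ) + 1) * Real.log 2 := by positivity
    have h5 := pow_le_pow_left₀ h2 h1 2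
    rw [hc0, div_pow, div_mul_eq_mul_div, le_div_iff₀ (by positivity)]
    nlinarith [h5]
  have hAsum : Summable (fun n : ℕ => ((n:ℝ) + 1) ^ 2 * A n) := by
    set g : ℕ → ℝ := fun i => c0 * (w i * Real.log (i:ℝ) ^ 2) with hg
    have hg0 : ∀ i, 0 ≤ g i := by
      intro i
      rw [hg]
      dsimp only
      have h6 := hw0 i
      have h7 : (0:ℝ) ≤ Real.log (i:ℝ) ^ 2 := sq_nonneg _
      have h8 : (0:ℝ) ≤ c0 := by rw [hc0]; positivity
      exact mul_nonneg h8 (mul_nonneg h6 h7)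
    have hgsum : Summable (fun n : ℕ => g (n + 1)) := by
      refine (hWlog.mul_left c0).congr fun n => ?_
      rw [hg]
      dsimp only
      push_cast
      ring
    refine summable_of_sum_range_le (c := ∑' n, g (n + 1))
      (fun n => mul_nonneg (by positivity) (hA0 n)) fun N => ?_
    have hstep1 : ∀ n ∈ Finset.range N,
        ((n:ℝ) + 1) ^ 2 * A n ≤ ∑ i ∈ Finset.Ioc (2 ^ n) (2 ^ (n + 1)), g i := by
      intro n _
      rw [hA]
      dsimp only
      rw [Finset.mul_sum]
      refine Finset.sum_le_sum fun i hi => ?_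
      have hii := Finset.mem_Ioc.1 hi
      have h1 := hnlog n i hii.1
      have h2 := hw0 i
      calc ((n:ℝ) + 1) ^ 2 * w i ≤ (c0 * Real.log (i:ℝ) ^ 2) * w i :=
            mul_le_mul_of_nonneg_right h1 h2
        _ = g i := by rw [hg]; dsimp only; ring
    calc ∑ n ∈ Finset.range N, ((n:ℝ) + 1) ^ 2 * A n
        ≤ ∑ n ∈ Finset.range N, ∑ i ∈ Finset.Ioc (2 ^ n) (2 ^ (n + 1)), g i :=
          Finset.sum_le_sum hstep1
      _ = ∑ i ∈ Finset.Ioc 1 (2 ^ N), g i := sum_dyadic g N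
      _ ≤ ∑' n, g (n + 1) := by
          have himg : ∑ i ∈ Finset.Ioc 1 (2 ^ N), g i
              = ∑ n ∈ (Finset.Ioc 1 (2 ^ N)).image (fun i => i - 1), g (n + 1) := by
            rw [Finset.sum_image (by
              intro x hx y hy hxy
              have hx' := Finset.mem_Ioc.1 hx
              have hy' := Finset.mem_Ioc.1 hy
              simp only at hxy
              omega)]
            refine Finset.sum_congr rfl fun i hi => ?_
            have := Finset.mem_Ioc.1 hi
            congr 1
            omega
          rw [himg]
          exact hgsum.sum_le_tsum _ (fun n _ => hg0 (n + 1))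
  have hRfSumInt : Summable (fun n => ∫ ω, Rf n ω ∂μ) :=
    Summable.of_nonneg_of_le (fun n => integral_nonneg (hRf0 n)) hRfBound hAsum
  have haeR : ∀ᵐ ω ∂μ, Summable fun n => Rf n ω :=
    ae_summable_of_summable_integral hRfInt hRf0 hRfSumInt
  -- increments along the dyadic subsequence
  set Δ : ℕ → Ω → ℝ := fun n ω => S (2 ^ (n + 1)) ω - S (2 ^ n) ω with hΔ
  have hΔMem : ∀ n, MemLp (Δ n) 2 μ := fun n => by
    rw [hΔ]
    exact hSdiffMem _ _ (hpow_le n)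
  have hΔabsInt : ∀ n, Integrable (fun ω => |Δ n ω|) μ :=
    fun n => ((hΔMem n).integrable one_le_two).abs
  have hinv2 : Summable (fun n : ℕ => (((n:ℝ) + 1) ^ 2)⁻¹) := by
    have h1 := summable_shift_rpow (p := (-2:ℝ)) (by norm_num)
    refine h1.congr fun n => ?_
    rw [show (-2:ℝ) = -((2:ℕ):ℝ) by norm_num, Real.rpow_neg (by positivity),
      Real.rpow_natCast]
  have hΔsq : ∀ n, ∫ ω, (Δ n ω) ^ 2 ∂μ ≤ A n := by
    intro n
    rw [hΔ, hA]
    exact hkeyS _ _ (hpow_le n)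
  have hDsum : Summable (fun n => ∫ ω, |Δ n ω| ∂μ) := by
    have hb1 : ∀ n, ∫ ω, |Δ n ω| ∂μ
        ≤ 2⁻¹ * (((n:ℝ) + 1) ^ 2 * A n + (((n:ℝ) + 1) ^ 2)⁻¹) := by
      intro n
      have hIsq : Integrable (fun ω => (Δ n ω) ^ 2) μ := (hΔMem n).integrable_sq
      have hIrhs : Integrable (fun ω =>
          2⁻¹ * (((n:ℝ) + 1) ^ 2 * (Δ n ω) ^ 2 + (((n:ℝ) + 1) ^ 2)⁻¹)) μ :=
        ((hIsq.const_mul _).add (integrable_const _)).const_mul _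
      have hptw : ∀ ω, |Δ n ω|
          ≤ 2⁻¹ * (((n:ℝ) + 1) ^ 2 * (Δ n ω) ^ 2 + (((n:ℝ) + 1) ^ 2)⁻¹) := by
        intro ω
        have hp : (0:ℝ) < (n:ℝ) + 1 := by positivity
        have hc : ((n:ℝ) + 1) * ((n:ℝ) + 1)⁻¹ = 1 := mul_inv_cancel₀ (ne_of_gt hp)
        have h11 : (((n:ℝ) + 1) ^ 2)⁻¹ = (((n:ℝ) + 1)⁻¹) ^ 2 := by
          rw [inv_pow]
        rw [h11]
        have h14 : (0:ℝ) ≤ ((n:ℝ) + 1) ^ 2 * (Δ n ω) ^ 2 - 2 * |Δ n ω| + (((n:ℝ) + 1)⁻¹) ^ 2 := by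
          calc (0:ℝ) ≤ (((n:ℝ) + 1) * |Δ n ω| - ((n:ℝ) + 1)⁻¹) ^ 2 := sq_nonneg _
            _ = ((n:ℝ) + 1) ^ 2 * |Δ n ω| ^ 2
                - 2 * (((n:ℝ) + 1) * ((n:ℝ) + 1)⁻¹) * |Δ n ω| + (((n:ℝ) + 1)⁻¹) ^ 2 := by
                ring
            _ = ((n:ℝ) + 1) ^ 2 * (Δ n ω) ^ 2 - 2 * |Δ n ω| + (((n:ℝ) + 1)⁻¹) ^ 2 := by
                rw [hc, sq_abs]
                ring
        linarith
      have hmono := integral_mono (hΔabsInt n) hIrhs hptw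
      have hcomp : ∫ ω, 2⁻¹ * (((n:ℝ) + 1) ^ 2 * (Δ n ω) ^ 2 + (((n:ℝ) + 1) ^ 2)⁻¹) ∂μ
          = 2⁻¹ * (((n:ℝ) + 1) ^ 2 * (∫ ω, (Δ n ω) ^ 2 ∂μ) + (((n:ℝ) + 1) ^ 2)⁻¹) := by
        rw [integral_const_mul, integral_add (hIsq.const_mul _) (integrable_const _),
          integral_const_mul, integral_const]
        simp only [measure_univ, probReal_univ, ENNReal.toReal_one, smul_eq_mul, one_mul, mul_one]
      rw [hcomp] at hmono
      have h12 : ((n:ℝ) + 1) ^ 2 * (∫ ω, (Δ n ω) ^ 2 ∂μ) ≤ ((n:ℝ) + 1) ^ 2 * A n :=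
        mul_le_mul_of_nonneg_left (hΔsq n) (by positivity)
      linarith
    refine Summable.of_nonneg_of_le
      (fun n => integral_nonneg fun ω => abs_nonneg _) hb1 ?_
    exact (hAsum.add hinv2).mul_left 2⁻¹
  have haeD : ∀ᵐ ω ∂μ, Summable fun n => |Δ n ω| :=
    ae_summable_of_summable_integral hΔabsInt (fun n ω => abs_nonneg _) hDsum
  -- conclusion
  filter_upwards [haeD, haeR] with ω hDω hRω
  have hsumΔ : Summable (fun n => Δ n ω) := Summable.of_abs hDω
  refine ⟨S 1 ω + ∑' n, Δ n ω, ?_⟩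
  have hgoal_eq : (fun N => ∑ i ∈ Finset.Icc 1 N, (X i ω - ∫ ω', X i ω' ∂μ) / b i)
      = fun N => S N ω := by
    funext N
    rw [hS]
    dsimp only
    rw [show (1:ℕ) = 0 + 1 from rfl, Finset.Icc_add_one_left_eq_Ioc]
  rw [hgoal_eq]
  have htel : ∀ N : ℕ, S (2 ^ N) ω = S 1 ω + ∑ n ∈ Finset.range N, Δ n ω := by
    intro N
    have h1 := Finset.sum_range_sub (fun k => S (2 ^ k) ω) N
    rw [hΔ]
    dsimp only
    rw [h1]
    simp [pow_zero]
  have hT : Tendsto (fun N => S (2 ^ N) ω) atTop (nhds (S 1 ω + ∑' n, Δ n ω)) := by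
    have h1 := hsumΔ.hasSum.tendsto_sum_nat
    have h2 := h1.const_add (S 1 ω)
    exact h2.congr fun N => (htel N).symm
  have hR0 : Tendsto (fun n => Rf n ω) atTop (nhds 0) := hRω.tendsto_atTop_zero
  rw [Metric.tendsto_atTop]
  intro ε hε
  obtain ⟨n₁, hn₁⟩ := Metric.tendsto_atTop.1 hT (ε / 2) (by linarith)
  obtain ⟨n₂, hn₂⟩ := Metric.tendsto_atTop.1 hR0 ((ε / 2) ^ 2) (by positivity)
  refine ⟨2 ^ (max n₁ n₂), fun N hN => ?_⟩
  have hN0 : N ≠ 0 := by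
    have h1 : (1:ℕ) ≤ 2 ^ (max n₁ n₂) := Nat.one_le_two_pow
    omega
  set nn := Nat.log 2 N with hnn
  have hlow : 2 ^ nn ≤ N := Nat.pow_log_le_self 2 hN0
  have hhigh : N < 2 ^ (nn + 1) := Nat.lt_pow_succ_log_self (by norm_num) N
  have hge : max n₁ n₂ ≤ nn := by
    rw [hnn]
    exact (Nat.le_log_iff_pow_le (by norm_num) hN0).2 hN
  have hchain : (S N ω - S (2 ^ nn) ω) ^ 2 ≤ Rf nn ω := by
    rw [hRf]
    exact rm_cor (fun M => S M ω) nn N hlow (le_of_lt hhigh)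
  have hRn : Rf nn ω < (ε / 2) ^ 2 := by
    have h1 := hn₂ nn (le_trans (le_max_right _ _) hge)
    rw [Real.dist_eq, sub_zero] at h1
    calc Rf nn ω ≤ |Rf nn ω| := le_abs_self _
      _ < (ε / 2) ^ 2 := h1
  have hsq : |S N ω - S (2 ^ nn) ω| < ε / 2 := by
    have h1 := Real.abs_le_sqrt hchain
    have h2 : Real.sqrt (Rf nn ω) < ε / 2 := (Real.sqrt_lt' (by linarith)).2 hRn
    linarith
  have hd1 := hn₁ nn (le_trans (le_max_left _ _) hge)
  rw [Real.dist_eq] at hd1 ⊢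
  have h13 : |S N ω - (S 1 ω + ∑' n, Δ n ω)|
      ≤ |S N ω - S (2 ^ nn) ω| + |S (2 ^ nn) ω - (S 1 ω + ∑' n, Δ n ω)| := by
    have := abs_sub_le (S N ω) (S (2 ^ nn) ω) (S 1 ω + ∑' n, Δ n ω)
    linarith
  linarith
end

section
/- Let h ≥ 1 be a natural number, let x : ℕ → ℝ be a deterministic sequence with |x_k| ≤ L for all k and some finite L, let (η_k)_{k ∈ ℕ} be independent and identically distributed real-valued random variables with E[|η_0|^{2h}] < ∞, write m_d = E[η_0^d], and set y_k = x_k + η_k. Then (1/N) · Σ_{k=0}^{N−1} ( y_k^h − Σ_{d=0}^{h} C(h,d) · x_k^{h−d} · m_d ) → 0 almost surely as N → ∞. -/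
open MeasureTheory ProbabilityTheory Filter
open scoped ENNReal NNReal

set_option maxHeartbeats 1000000 in
/-- Key step: for independent mean-zero L² variables with uniformly bounded
variance, the deviation `|S_N| ≤ ε N` holds eventually, almost surely. -/
lemma l2_slln_eps {Ω : Type*} [MeasurableSpace Ω] (μ : Measure Ω) [IsProbabilityMeasure μ]
    (Z : ℕ → Ω → ℝ) (hL2 : ∀ k, MemLp (Z k) 2 μ)
    (hmean : ∀ k, ∫ ω, Z k ω ∂μ = 0)
    (hind : ∀ i j, i ≠ j → IndepFun (Z i) (Z j) μ)
    (C : ℝ) (hC0 : 0 ≤ C) (hC : ∀ k, variance (Z k) μ ≤ C)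
    (ε : ℝ) (hε : 0 < ε) :
    ∀ᵐ ω ∂μ, ∀ᶠ N : ℕ in atTop, |∑ k ∈ Finset.range N, Z k ω| ≤ ε * N := by
  -- block sums
  have hT2 : ∀ a b : ℕ, MemLp (fun ω => ∑ k ∈ Finset.Ico a b, Z k ω) 2 μ := by
    intro a b
    have := memLp_finset_sum' (μ := μ) (p := 2) (Finset.Ico a b) (fun i _ => hL2 i)
    convert this using 1
    ext ω; simp
  have hTmean : ∀ a b : ℕ, ∫ ω, (∑ k ∈ Finset.Ico a b, Z k ω) ∂μ = 0 := by
    intro a b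
    rw [integral_finset_sum _ (fun i _ => (hL2 i).integrable one_le_two)]
    simp [hmean]
  have hTvar : ∀ a b : ℕ, variance (fun ω => ∑ k ∈ Finset.Ico a b, Z k ω) μ
      ≤ (b - a : ℕ) * C := by
    intro a b
    have h1 : (fun ω => ∑ k ∈ Finset.Ico a b, Z k ω) = ∑ k ∈ Finset.Ico a b, Z k := by
      ext ω; simp
    rw [h1, IndepFun.variance_sum (X := Z) (fun i _ => hL2 i)
      (fun i _ j _ hij => hind i j hij)]
    calc ∑ k ∈ Finset.Ico a b, variance (Z k) μ ≤ ∑ _k ∈ Finset.Ico a b, C :=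
          Finset.sum_le_sum (fun i _ => hC i)
      _ = (b - a : ℕ) * C := by
          rw [Finset.sum_const, Nat.card_Ico, nsmul_eq_mul]
  have hcheb : ∀ a b : ℕ, ∀ c : ℝ, 0 < c →
      μ {ω | c ≤ |∑ k ∈ Finset.Ico a b, Z k ω|}
        ≤ ENNReal.ofReal (((b - a : ℕ) : ℝ) * C / c ^ 2) := by
    intro a b c hc
    have h1 := meas_ge_le_variance_div_sq (μ := μ) (hT2 a b) hc
    rw [hTmean a b] at h1
    simp only [sub_zero] at h1
    refine h1.trans (ENNReal.ofReal_le_ofReal ?_)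
    exact div_le_div_of_nonneg_right (hTvar a b) (by positivity) |>.trans_eq rfl
  -- events
  set A : ℕ → Set Ω := fun n => {ω | ∃ N : ℕ, n ^ 2 ≤ N ∧ N < (n + 1) ^ 2 ∧
      ε * (n : ℝ) ^ 2 ≤ |∑ k ∈ Finset.range N, Z k ω|} with hA_def
  have hsub : ∀ n : ℕ, A n ⊆ {ω | ε / 2 * (n : ℝ) ^ 2 ≤ |∑ k ∈ Finset.Ico 0 (n ^ 2), Z k ω|}
      ∪ ⋃ N ∈ Finset.Ico (n ^ 2) ((n + 1) ^ 2),
        {ω | ε / 2 * (n : ℝ) ^ 2 ≤ |∑ k ∈ Finset.Ico (n ^ 2) N, Z k ω|} := by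
    intro n ω hω
    obtain ⟨N, h1, h2, h3⟩ := hω
    have hsplit : ∑ k ∈ Finset.range N, Z k ω
        = (∑ k ∈ Finset.Ico 0 (n ^ 2), Z k ω) + ∑ k ∈ Finset.Ico (n ^ 2) N, Z k ω := by
      rw [Finset.range_eq_Ico, ← Finset.sum_Ico_consecutive (fun k => Z k ω) (Nat.zero_le _) h1]
    by_cases hcase : ε / 2 * (n : ℝ) ^ 2 ≤ |∑ k ∈ Finset.Ico 0 (n ^ 2), Z k ω|
    · exact Set.mem_union_left _ hcase
    · refine Set.mem_union_right _ ?_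
      rw [Set.mem_iUnion₂]
      refine ⟨N, Finset.mem_Ico.2 ⟨h1, h2⟩, ?_⟩
      have habs := abs_add_le (∑ k ∈ Finset.Ico 0 (n ^ 2), Z k ω)
        (∑ k ∈ Finset.Ico (n ^ 2) N, Z k ω)
      rw [← hsplit] at habs
      push_neg at hcase
      simp only [Set.mem_setOf_eq]
      linarith
  -- measure bound
  have hAbound : ∀ n : ℕ, 1 ≤ n → μ (A n) ≤ ENNReal.ofReal (28 * C / ε ^ 2 / (n : ℝ) ^ 2) := by
    intro n hn
    have hn' : (1 : ℝ) ≤ (n : ℝ) := by exact_mod_cast hn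
    have hnpos : (0 : ℝ) < (n : ℝ) := by linarith
    have hc : 0 < ε / 2 * (n : ℝ) ^ 2 := by positivity
    have hE1 : μ {ω | ε / 2 * (n : ℝ) ^ 2 ≤ |∑ k ∈ Finset.Ico 0 (n ^ 2), Z k ω|}
        ≤ ENNReal.ofReal (4 * C / ε ^ 2 / (n : ℝ) ^ 2) := by
      refine (hcheb 0 (n ^ 2) _ hc).trans (ENNReal.ofReal_le_ofReal (le_of_eq ?_))
      have : ((n ^ 2 - 0 : ℕ) : ℝ) = (n : ℝ) ^ 2 := by rw [Nat.sub_zero]; push_cast; ring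
      rw [this]
      field_simp
      ring
    have hE2 : ∀ N ∈ Finset.Ico (n ^ 2) ((n + 1) ^ 2),
        μ {ω | ε / 2 * (n : ℝ) ^ 2 ≤ |∑ k ∈ Finset.Ico (n ^ 2) N, Z k ω|}
        ≤ ENNReal.ofReal (8 * C / ε ^ 2 / (n : ℝ) ^ 3) := by
      intro N hN
      rw [Finset.mem_Ico] at hN
      refine (hcheb (n ^ 2) N _ hc).trans (ENNReal.ofReal_le_ofReal ?_)
      have hcard : ((N - n ^ 2 : ℕ) : ℝ) ≤ 2 * (n : ℝ) := by
        have hsq : (n + 1) ^ 2 = n ^ 2 + 2 * n + 1 := by ring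
        have : N - n ^ 2 ≤ 2 * n := by omega
        calc ((N - n ^ 2 : ℕ) : ℝ) ≤ ((2 * n : ℕ) : ℝ) := by exact_mod_cast this
          _ = 2 * (n : ℝ) := by push_cast; ring
      calc ((N - n ^ 2 : ℕ) : ℝ) * C / (ε / 2 * (n : ℝ) ^ 2) ^ 2
          ≤ (2 * (n : ℝ)) * C / (ε / 2 * (n : ℝ) ^ 2) ^ 2 := by gcongr
        _ = 8 * C / ε ^ 2 / (n : ℝ) ^ 3 := by field_simp; ring
    calc μ (A n) ≤ _ := measure_mono (hsub n)
      _ ≤ μ {ω | ε / 2 * (n : ℝ) ^ 2 ≤ |∑ k ∈ Finset.Ico 0 (n ^ 2), Z k ω|}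
          + μ (⋃ N ∈ Finset.Ico (n ^ 2) ((n + 1) ^ 2),
            {ω | ε / 2 * (n : ℝ) ^ 2 ≤ |∑ k ∈ Finset.Ico (n ^ 2) N, Z k ω|}) :=
          measure_union_le _ _
      _ ≤ ENNReal.ofReal (4 * C / ε ^ 2 / (n : ℝ) ^ 2)
          + ∑ N ∈ Finset.Ico (n ^ 2) ((n + 1) ^ 2),
            ENNReal.ofReal (8 * C / ε ^ 2 / (n : ℝ) ^ 3) := by
          exact add_le_add hE1
            ((measure_biUnion_finset_le _ _).trans (Finset.sum_le_sum hE2))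
      _ ≤ ENNReal.ofReal (28 * C / ε ^ 2 / (n : ℝ) ^ 2) := by
          rw [Finset.sum_const, Nat.card_Ico, nsmul_eq_mul]
          have hcard : (n + 1) ^ 2 - n ^ 2 = 2 * n + 1 := by
            have : (n + 1) ^ 2 = n ^ 2 + 2 * n + 1 := by ring
            omega
          rw [hcard]
          rw [show ((2 * n + 1 : ℕ) : ℝ≥0∞) = ENNReal.ofReal ((2 * n + 1 : ℕ) : ℝ) by
            rw [ENNReal.ofReal_natCast]]
          rw [← ENNReal.ofReal_mul (by positivity), ← ENNReal.ofReal_add (by positivity)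
            (by positivity)]
          refine ENNReal.ofReal_le_ofReal ?_
          have h1 : ((2 * n + 1 : ℕ) : ℝ) ≤ 3 * (n : ℝ) := by push_cast; linarith
          have h2 : ((2 * n + 1 : ℕ) : ℝ) * (8 * C / ε ^ 2 / (n : ℝ) ^ 3)
              ≤ 3 * (n : ℝ) * (8 * C / ε ^ 2 / (n : ℝ) ^ 3) := by
            have : 0 ≤ 8 * C / ε ^ 2 / (n : ℝ) ^ 3 := by positivity
            nlinarith
          have h3 : 3 * (n : ℝ) * (8 * C / ε ^ 2 / (n : ℝ) ^ 3)
              = 24 * C / ε ^ 2 / (n : ℝ) ^ 2 := by field_simp; ring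
          have h4 : 4 * C / ε ^ 2 / (n : ℝ) ^ 2 + 24 * C / ε ^ 2 / (n : ℝ) ^ 2
              = 28 * C / ε ^ 2 / (n : ℝ) ^ 2 := by ring
          linarith
  -- Borel–Cantelli
  have hsum : ∑' n : ℕ, μ (A (n + 1)) ≠ ⊤ := by
    have hs2 : Summable (fun n : ℕ => 28 * C / ε ^ 2 / ((n : ℝ) + 1) ^ 2) := by
      have h0 : Summable (fun n : ℕ => 1 / ((n : ℝ)) ^ 2) :=
        (Real.summable_one_div_nat_pow (p := 2)).2 one_lt_two
      have h1 : Summable (fun n : ℕ => 1 / (((n + 1 : ℕ)) : ℝ) ^ 2) :=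
        (summable_nat_add_iff 1).2 h0
      have h2 : Summable (fun n : ℕ => (28 * C / ε ^ 2) * (1 / (((n + 1 : ℕ)) : ℝ) ^ 2)) :=
        h1.mul_left _
      refine h2.congr fun n => ?_
      push_cast
      ring
    have htail : ∑' n : ℕ, μ (A (n + 1))
        ≤ ENNReal.ofReal (∑' n : ℕ, 28 * C / ε ^ 2 / ((n : ℝ) + 1) ^ 2) := by
      rw [ENNReal.ofReal_tsum_of_nonneg (fun n => by positivity) hs2]
      refine ENNReal.tsum_le_tsum fun n => ?_
      have hb := hAbound (n + 1) (Nat.succ_le_succ (Nat.zero_le _))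
      refine hb.trans (le_of_eq ?_)
      push_cast
      ring_nf
    exact (htail.trans_lt ENNReal.ofReal_lt_top).ne
  have hBC : μ {ω | ∃ᶠ n : ℕ in atTop, ω ∈ A (n + 1)} = 0 :=
    measure_setOf_frequently_eq_zero (by simpa using hsum)
  have hae : ∀ᵐ ω ∂μ, ∀ᶠ n : ℕ in atTop, ω ∉ A (n + 1) := by
    rw [ae_iff]
    have hset : {ω | ¬ ∀ᶠ n : ℕ in atTop, ω ∉ A (n + 1)}
        = {ω | ∃ᶠ n : ℕ in atTop, ω ∈ A (n + 1)} := by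
      ext ω
      simp only [Set.mem_setOf_eq, Filter.not_eventually, not_not]
    rw [hset]
    exact hBC
  filter_upwards [hae] with ω hω
  obtain ⟨n₀', hn₀'⟩ := eventually_atTop.1 hω
  have hn₀ : ∀ n, n₀' + 1 ≤ n → ω ∉ A n := by
    intro n hn
    have := hn₀' (n - 1) (by omega)
    rwa [show n - 1 + 1 = n by omega] at this
  set n₀ := n₀' + 1 with hn₀_def
  refine eventually_atTop.2 ⟨(n₀ + 1) ^ 2, fun N hN => ?_⟩
  set n := N.sqrt with hn_def
  have h1 : n ^ 2 ≤ N := Nat.sqrt_le' N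
  have h2 : N < (n + 1) ^ 2 := Nat.lt_succ_sqrt' N
  have hge : n₀ + 1 ≤ n := Nat.le_sqrt'.2 hN
  have hnotin : ω ∉ A n := hn₀ n (le_trans (Nat.le_succ n₀) hge)
  rw [hA_def] at hnotin
  simp only [Set.mem_setOf_eq, not_exists, not_and, not_le] at hnotin
  have hlt := hnotin N h1 h2
  have hcast : ((n : ℝ)) ^ 2 ≤ (N : ℝ) := by exact_mod_cast h1
  have : ε * (n : ℝ) ^ 2 ≤ ε * N := by nlinarith
  linarith [hlt, this]

/-- L² strong law of large numbers for independent, mean-zero random variables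
with uniformly bounded variances. -/
lemma l2_slln {Ω : Type*} [MeasurableSpace Ω] (μ : Measure Ω) [IsProbabilityMeasure μ]
    (Z : ℕ → Ω → ℝ) (hL2 : ∀ k, MemLp (Z k) 2 μ)
    (hmean : ∀ k, ∫ ω, Z k ω ∂μ = 0)
    (hind : ∀ i j, i ≠ j → IndepFun (Z i) (Z j) μ)
    (C : ℝ) (hC0 : 0 ≤ C) (hC : ∀ k, variance (Z k) μ ≤ C) :
    ∀ᵐ ω ∂μ, Tendsto (fun N : ℕ => (1 / (N : ℝ)) * ∑ k ∈ Finset.range N, Z k ω)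
      atTop (nhds 0) := by
  have key : ∀ᵐ ω ∂μ, ∀ j : ℕ, ∀ᶠ N : ℕ in atTop,
      |∑ k ∈ Finset.range N, Z k ω| ≤ (1 / ((j : ℝ) + 1)) * N := by
    rw [ae_all_iff]
    intro j
    exact l2_slln_eps μ Z hL2 hmean hind C hC0 hC _ (by positivity)
  filter_upwards [key] with ω hω
  rw [Metric.tendsto_atTop]
  intro ε hε
  obtain ⟨j, hj⟩ := exists_nat_one_div_lt hε
  obtain ⟨N₀, hN₀⟩ := eventually_atTop.1 (hω j)
  refine ⟨max N₀ 1, fun N hN => ?_⟩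
  have hN1 : 1 ≤ N := le_trans (le_max_right _ _) hN
  have hNpos : (0 : ℝ) < N := by exact_mod_cast hN1
  have hb := hN₀ N (le_trans (le_max_left _ _) hN)
  rw [Real.dist_eq, sub_zero, abs_mul, abs_of_pos (by positivity : (0:ℝ) < 1 / (N:ℝ))]
  calc 1 / (N:ℝ) * |∑ k ∈ Finset.range N, Z k ω|
      ≤ 1 / (N:ℝ) * ((1 / ((j:ℝ) + 1)) * N) :=
        mul_le_mul_of_nonneg_left hb (by positivity)
    _ = 1 / ((j:ℝ) + 1) := by field_simp
    _ < ε := hj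


set_option maxHeartbeats 1000000 in
/-- entrywise form of Theorem 1 of the paper.
Let `h ≥ 1`, `x : ℕ → ℝ` deterministic with `|x_k| ≤ L`, and `(η_k)` iid real
random variables with `E[|η_0|^(2h)] < ∞` and moments `m_d = E[η_0^d]`.  With
`y_k = x_k + η_k`, the corrected empirical average
`(1/N) ∑_{k<N} (y_k^h - ∑_{d=0}^h C(h,d) x_k^(h-d) m_d)` tends to `0` almost
surely. -/
theorem statement8
    {Ω : Type*} [MeasurableSpace Ω] (μ : Measure Ω) [IsProbabilityMeasure μ]
    (h : ℕ) (hh : 1 ≤ h)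
    (x : ℕ → ℝ) (L : ℝ) (hx : ∀ k, |x k| ≤ L)
    (η : ℕ → Ω → ℝ) (hmeas : ∀ k, Measurable (η k))
    (hindep : iIndepFun η μ)
    (hident : ∀ k, IdentDistrib (η k) (η 0) μ μ)
    (hmom : Integrable (fun ω => |η 0 ω| ^ (2 * h)) μ)
    (m : ℕ → ℝ) (hm : ∀ d, m d = ∫ ω, η 0 ω ^ d ∂μ)
    (y : ℕ → Ω → ℝ) (hy : ∀ k ω, y k ω = x k + η k ω) :
    ∀ᵐ ω ∂μ, Tendsto
      (fun N : ℕ => (1 / (N : ℝ)) * ∑ k ∈ Finset.range N,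
        (y k ω ^ h - ∑ d ∈ Finset.range (h + 1),
          (h.choose d : ℝ) * x k ^ (h - d) * m d))
      atTop (nhds 0) := by
  have hL0 : (0 : ℝ) ≤ L := (abs_nonneg _).trans (hx 0)
  set c : ℕ → ℝ := fun k =>
    ∑ d ∈ Finset.range (h + 1), (h.choose d : ℝ) * x k ^ (h - d) * m d with hc_def
  set Z : ℕ → Ω → ℝ := fun k ω => (x k + η k ω) ^ h - c k with hZ_def
  -- measurability
  have hmW : ∀ k, Measurable (fun ω => (x k + η k ω) ^ h) :=
    fun k => (measurable_const.add (hmeas k)).pow_const h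
  -- integrability of |η k|^(2h)
  have hint2h : ∀ k, Integrable (fun ω => |η k ω| ^ (2 * h)) μ := by
    intro k
    have hid : IdentDistrib (fun ω => |η k ω| ^ (2 * h))
        (fun ω => |η 0 ω| ^ (2 * h)) μ μ :=
      (hident k).comp (measurable_abs.pow_const (2 * h))
    exact hid.integrable_iff.2 hmom
  set M : ℝ := ∫ ω, |η 0 ω| ^ (2 * h) ∂μ with hM_def
  have hM0 : 0 ≤ M := integral_nonneg fun ω => by positivity
  have hMk : ∀ k, ∫ ω, |η k ω| ^ (2 * h) ∂μ = M :=
    fun k => ((hident k).comp (measurable_abs.pow_const (2 * h))).integral_eq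
  -- pointwise square bound
  have hWsq_le : ∀ k ω, ((x k + η k ω) ^ h) ^ 2
      ≤ 2 ^ (2 * h) * (L ^ (2 * h) + |η k ω| ^ (2 * h)) := by
    intro k ω
    have h1 : |x k + η k ω| ≤ L + |η k ω| :=
      (abs_add_le _ _).trans (add_le_add_left (hx k) _)
    have h2 : ((x k + η k ω) ^ h) ^ 2 = |x k + η k ω| ^ (2 * h) := by
      rw [← sq_abs, abs_pow, ← pow_mul, mul_comm h 2]
    rw [h2]
    have h3 : |x k + η k ω| ^ (2 * h) ≤ (L + |η k ω|) ^ (2 * h) :=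
      pow_le_pow_left₀ (abs_nonneg _) h1 _
    have h4 : L + |η k ω| ≤ 2 * max L |η k ω| := by
      have := le_max_left L |η k ω|
      have := le_max_right L |η k ω|
      linarith
    have h5 : (L + |η k ω|) ^ (2 * h) ≤ (2 * max L |η k ω|) ^ (2 * h) :=
      pow_le_pow_left₀ (by positivity) h4 _
    have h6 : (2 * max L |η k ω|) ^ (2 * h)
        = 2 ^ (2 * h) * (max L |η k ω|) ^ (2 * h) := mul_pow _ _ _
    have h7 : (max L |η k ω|) ^ (2 * h) ≤ L ^ (2 * h) + |η k ω| ^ (2 * h) := by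
      rcases max_choice L |η k ω| with hmx | hmx <;> rw [hmx]
      · have : (0:ℝ) ≤ |η k ω| ^ (2 * h) := by positivity
        linarith
      · have : (0:ℝ) ≤ L ^ (2 * h) := by positivity
        linarith
    calc |x k + η k ω| ^ (2 * h) ≤ (2 * max L |η k ω|) ^ (2 * h) := h3.trans h5
      _ = 2 ^ (2 * h) * (max L |η k ω|) ^ (2 * h) := h6
      _ ≤ 2 ^ (2 * h) * (L ^ (2 * h) + |η k ω| ^ (2 * h)) := by
          have : (0:ℝ) ≤ (2:ℝ) ^ (2 * h) := by positivity
          nlinarith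
  -- integrability of W²
  have hg_int : ∀ k, Integrable
      (fun ω => 2 ^ (2 * h) * (L ^ (2 * h) + |η k ω| ^ (2 * h))) μ :=
    fun k => ((integrable_const (L ^ (2 * h))).add (hint2h k)).const_mul _
  have hWsq_int : ∀ k, Integrable (fun ω => ((x k + η k ω) ^ h) ^ 2) μ := by
    intro k
    refine Integrable.mono' (hg_int k) ((hmW k).pow_const 2).aestronglyMeasurable
      (ae_of_all _ fun ω => ?_)
    rw [Real.norm_eq_abs, abs_of_nonneg (sq_nonneg _)]
    exact hWsq_le k ω
  have hW2 : ∀ k, MemLp (fun ω => (x k + η k ω) ^ h) 2 μ :=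
    fun k => (memLp_two_iff_integrable_sq (hmW k).aestronglyMeasurable).2 (hWsq_int k)
  have hZ2 : ∀ k, MemLp (Z k) 2 μ := fun k => (hW2 k).sub (memLp_const (c k))
  -- integrability of powers of η
  have hηd_int : ∀ k d, d ≤ 2 * h → Integrable (fun ω => η k ω ^ d) μ := by
    intro k d hd
    have hb : ∀ ω, ‖η k ω ^ d‖ ≤ 1 + |η k ω| ^ (2 * h) := by
      intro ω
      rw [Real.norm_eq_abs, abs_pow]
      rcases le_total (|η k ω|) 1 with hle | hle
      · have h1 : |η k ω| ^ d ≤ 1 := pow_le_one₀ (abs_nonneg _) hle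
        have h2 : (0:ℝ) ≤ |η k ω| ^ (2 * h) := by positivity
        linarith
      · have h1 : |η k ω| ^ d ≤ |η k ω| ^ (2 * h) := pow_le_pow_right₀ hle hd
        linarith
    exact Integrable.mono' ((integrable_const 1).add (hint2h k))
      (((hmeas k).pow_const d).aestronglyMeasurable) (ae_of_all _ hb)
  have hηd_eq : ∀ k d, ∫ ω, η k ω ^ d ∂μ = m d := by
    intro k d
    rw [hm d]
    exact ((hident k).comp (measurable_id.pow_const d)).integral_eq
  -- integral of W
  have hintW : ∀ k, ∫ ω, (x k + η k ω) ^ h ∂μ = c k := by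
    intro k
    have hexp : ∀ ω : Ω, (x k + η k ω) ^ h
        = ∑ d ∈ Finset.range (h + 1), η k ω ^ d * x k ^ (h - d) * (h.choose d : ℝ) := by
      intro ω
      rw [add_comm (x k), add_pow]
    calc ∫ ω, (x k + η k ω) ^ h ∂μ
        = ∫ ω, ∑ d ∈ Finset.range (h + 1),
            η k ω ^ d * x k ^ (h - d) * (h.choose d : ℝ) ∂μ := by
          exact integral_congr_ae (ae_of_all _ hexp)
      _ = ∑ d ∈ Finset.range (h + 1),
            ∫ ω, η k ω ^ d * x k ^ (h - d) * (h.choose d : ℝ) ∂μ := by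
          refine integral_finset_sum _ fun d hd => ?_
          have hd' : d ≤ 2 * h := by
            have := Finset.mem_range.mp hd
            omega
          exact ((hηd_int k d hd').mul_const _).mul_const _
      _ = c k := by
          rw [hc_def]
          refine Finset.sum_congr rfl fun d hd => ?_
          rw [integral_mul_const, integral_mul_const, hηd_eq k d]
          ring
  have hmean : ∀ k, ∫ ω, Z k ω ∂μ = 0 := by
    intro k
    rw [hZ_def]
    simp only
    rw [integral_sub ((hW2 k).integrable one_le_two) (integrable_const _),
      integral_const, hintW k]
    simp
  -- variance bound
  set B : ℝ := 2 ^ (2 * h) * (L ^ (2 * h) + M) with hB_def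
  have hB0 : 0 ≤ B := by positivity
  have hWsqint_le : ∀ k, ∫ ω, ((x k + η k ω) ^ h) ^ 2 ∂μ ≤ B := by
    intro k
    calc ∫ ω, ((x k + η k ω) ^ h) ^ 2 ∂μ
        ≤ ∫ ω, 2 ^ (2 * h) * (L ^ (2 * h) + |η k ω| ^ (2 * h)) ∂μ :=
          integral_mono (hWsq_int k) (hg_int k) (fun ω => hWsq_le k ω)
      _ = B := by
          rw [integral_const_mul, integral_add (integrable_const _) (hint2h k),
            integral_const, hMk k, hB_def]
          simp
  have hcksq : ∀ k, (c k) ^ 2 ≤ B := by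
    intro k
    have hJ : (∫ ω, (x k + η k ω) ^ h ∂μ) ^ 2
        ≤ ∫ ω, ((x k + η k ω) ^ h) ^ 2 ∂μ := by
      have hvn := variance_nonneg (fun ω => (x k + η k ω) ^ h) μ
      rw [variance_eq_sub (hW2 k)] at hvn
      simp only [Pi.pow_apply] at hvn
      linarith
    rw [← hintW k]
    exact hJ.trans (hWsqint_le k)
  have hZsq_int : ∀ k, Integrable (fun ω => Z k ω ^ 2) μ := fun k => (hZ2 k).integrable_sq
  have hvarZ : ∀ k, variance (Z k) μ ≤ 4 * B := by
    intro k
    rw [variance_eq_sub (hZ2 k), hmean k]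
    simp only [Pi.pow_apply]
    have hle : ∫ ω, Z k ω ^ 2 ∂μ ≤ 2 * B + 2 * (c k) ^ 2 := by
      calc ∫ ω, Z k ω ^ 2 ∂μ
          ≤ ∫ ω, (2 * ((x k + η k ω) ^ h) ^ 2 + 2 * (c k) ^ 2) ∂μ := by
            refine integral_mono (hZsq_int k)
              (((hWsq_int k).const_mul 2).add (integrable_const _)) (fun ω => ?_)
            rw [hZ_def]
            simp only
            nlinarith [sq_nonneg ((x k + η k ω) ^ h + c k)]
        _ = 2 * (∫ ω, ((x k + η k ω) ^ h) ^ 2 ∂μ) + 2 * (c k) ^ 2 := by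
            rw [integral_add ((hWsq_int k).const_mul 2) (integrable_const _),
              integral_const_mul, integral_const]
            simp
        _ ≤ 2 * B + 2 * (c k) ^ 2 := by
            have := hWsqint_le k
            linarith
    have := hcksq k
    linarith
  -- independence
  have hZind : ∀ i j, i ≠ j → IndepFun (Z i) (Z j) μ := by
    intro i j hij
    have hfi : Measurable (fun t : ℝ => (x i + t) ^ h - c i) :=
      ((measurable_const.add measurable_id).pow_const h).sub measurable_const
    have hfj : Measurable (fun t : ℝ => (x j + t) ^ h - c j) :=
      ((measurable_const.add measurable_id).pow_const h).sub measurable_const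
    exact (hindep.indepFun hij).comp hfi hfj
  -- conclude
  have hfinal := l2_slln μ Z hZ2 hmean hZind (4 * B) (by linarith) hvarZ
  filter_upwards [hfinal] with ω hω
  have heq : (fun N : ℕ => (1 / (N : ℝ)) * ∑ k ∈ Finset.range N,
      (y k ω ^ h - ∑ d ∈ Finset.range (h + 1),
        (h.choose d : ℝ) * x k ^ (h - d) * m d))
      = fun N : ℕ => (1 / (N : ℝ)) * ∑ k ∈ Finset.range N, Z k ω := by
    funext N
    congr 1
    refine Finset.sum_congr rfl fun k _ => ?_
    rw [hy, hZ_def]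
  rw [heq]
  exact hω
end

section
/- Let (ε_m)_{m ∈ ℕ} be square-integrable real-valued random variables with E[ε_m] = 0, E[ε_m²] = σ² for all m, and E[ε_m ε_{m'}] = 0 for m ≠ m'. Let M > 0 and 0 < a < 1, let g : ℕ × ℕ → ℝ satisfy |g(k,m)| ≤ M · a^{k−m} for all m ≤ k, and define y_i = Σ_{m=0}^{i} g(i,m) · ε_m. Then for all natural numbers i, j, |Cov(y_i, y_j)| = |E[y_i · y_j]| ≤ (σ² M² / (1 − a²)) · a^{|i−j|}. -/
open MeasureTheory Finset

/-- geometric covariance decay for a uniformly exponentially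
stable LTV system, proof of Corollary 1 of the paper.
With `(ε_m)` square-integrable, zero-mean, variance `σ²`, pairwise uncorrelated,
and `|g(k,m)| ≤ M a^(k-m)` for `m ≤ k` (`M > 0`, `0 < a < 1`), the outputs
`y_i = ∑_{m=0}^i g(i,m) ε_m` satisfy
`|Cov(y_i, y_j)| = |E[y_i y_j]| ≤ (σ² M² / (1 - a²)) a^|i-j|`. -/
theorem statement13
    {Ω : Type*} [MeasurableSpace Ω] (μ : Measure Ω) [IsProbabilityMeasure μ]
    (ε : ℕ → Ω → ℝ) (hL2 : ∀ m, MemLp (ε m) 2 μ)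
    (σ : ℝ)
    (hmean : ∀ m, ∫ ω, ε m ω ∂μ = 0)
    (hvar : ∀ m, ∫ ω, ε m ω ^ 2 ∂μ = σ ^ 2)
    (horth : ∀ m m', m ≠ m' → ∫ ω, ε m ω * ε m' ω ∂μ = 0)
    (M a : ℝ) (hM : 0 < M) (ha0 : 0 < a) (ha1 : a < 1)
    (g : ℕ → ℕ → ℝ)
    (hg : ∀ m k, m ≤ k → |g k m| ≤ M * a ^ (k - m))
    (y : ℕ → Ω → ℝ)
    (hy : ∀ i ω, y i ω = ∑ m ∈ Finset.range (i + 1), g i m * ε m ω)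
    (i j : ℕ) :
    |(∫ ω, y i ω * y j ω ∂μ) - (∫ ω, y i ω ∂μ) * (∫ ω, y j ω ∂μ)|
        = |∫ ω, y i ω * y j ω ∂μ| ∧
    |∫ ω, y i ω * y j ω ∂μ| ≤ σ ^ 2 * M ^ 2 / (1 - a ^ 2) * a ^ Nat.dist i j := by
  have hint : ∀ m, Integrable (ε m) μ := fun m => (hL2 m).integrable one_le_two
  have hintmul : ∀ m n, Integrable (fun ω => ε m ω * ε n ω) μ := by
    intro m n
    have h1 : Integrable (fun ω => (ε m ω + ε n ω) ^ 2) μ := by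
      simpa using ((hL2 m).add (hL2 n)).integrable_sq
    have h2 := (hL2 m).integrable_sq
    have h3 := (hL2 n).integrable_sq
    have h4 : (fun ω => ε m ω * ε n ω)
        = fun ω => (((ε m ω + ε n ω) ^ 2 - ε m ω ^ 2) - ε n ω ^ 2) * (1 / 2) := by
      funext ω; ring
    rw [h4]
    exact ((h1.sub h2).sub h3).mul_const _
  -- mean of y is zero
  have hymean : ∀ k, ∫ ω, y k ω ∂μ = 0 := by
    intro k
    have h0 : ∫ ω, y k ω ∂μ = ∑ m ∈ range (k + 1), ∫ ω, g k m * ε m ω ∂μ := by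
      rw [show (fun ω => y k ω) = fun ω => ∑ m ∈ range (k + 1), g k m * ε m ω from
        funext fun ω => hy k ω]
      exact integral_finset_sum _ (fun m _ => (hint m).const_mul _)
    simp [h0, integral_const_mul, hmean]
  -- covariance of the noise
  have hcov : ∀ m n : ℕ, ∫ ω, ε m ω * ε n ω ∂μ = if m = n then σ ^ 2 else 0 := by
    intro m n
    by_cases h : m = n
    · subst h
      simp only [if_pos rfl, ← hvar m]
      congr 1; funext ω; ring
    · simp [h, horth m n h]
  -- the key formula for the product integral
  have key : ∫ ω, y i ω * y j ω ∂μ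
      = ∑ m ∈ range (min i j + 1), g i m * g j m * σ ^ 2 := by
    have h1 : (fun ω => y i ω * y j ω)
        = fun ω => ∑ m ∈ range (i + 1), ∑ n ∈ range (j + 1),
            (g i m * g j n) * (ε m ω * ε n ω) := by
      funext ω
      rw [hy, hy, Finset.sum_mul_sum]
      exact Finset.sum_congr rfl fun m _ => Finset.sum_congr rfl fun n _ => by ring
    rw [h1, integral_finset_sum _ (fun m _ =>
      integrable_finset_sum _ (fun n _ => (hintmul m n).const_mul _))]
    have h4 : ∀ m ∈ range (i + 1),
        (∫ ω, ∑ n ∈ range (j + 1), (g i m * g j n) * (ε m ω * ε n ω) ∂μ)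
        = if m ∈ range (j + 1) then g i m * g j m * σ ^ 2 else 0 := by
      intro m _
      rw [integral_finset_sum _ (fun n _ => (hintmul m n).const_mul _)]
      have h3 : ∀ n ∈ range (j + 1), ∫ ω, (g i m * g j n) * (ε m ω * ε n ω) ∂μ
          = if m = n then g i m * g j n * σ ^ 2 else 0 := by
        intro n _
        rw [integral_const_mul, hcov m n]
        by_cases h : m = n <;> simp [h]
      rw [Finset.sum_congr rfl h3, Finset.sum_ite_eq]
    rw [Finset.sum_congr rfl h4, Finset.sum_ite_mem]
    congr 1
    ext x
    simp [Nat.lt_min, Nat.lt_succ_iff]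
  -- the bound
  have hσ : (0:ℝ) ≤ σ ^ 2 := sq_nonneg σ
  have ha2 : a ^ 2 < 1 := by nlinarith
  have ha2' : (0:ℝ) < 1 - a ^ 2 := by linarith
  set N := min i j with hN
  have hbound : |∫ ω, y i ω * y j ω ∂μ|
      ≤ σ ^ 2 * M ^ 2 / (1 - a ^ 2) * a ^ Nat.dist i j := by
    rw [key]
    calc |∑ m ∈ range (N + 1), g i m * g j m * σ ^ 2|
        ≤ ∑ m ∈ range (N + 1), |g i m * g j m * σ ^ 2| :=
          Finset.abs_sum_le_sum_abs _ _
      _ ≤ ∑ m ∈ range (N + 1),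
            σ ^ 2 * M ^ 2 * a ^ Nat.dist i j * (a ^ 2) ^ (N - m) := by
          apply Finset.sum_le_sum
          intro m hm
          rw [Finset.mem_range, Nat.lt_succ_iff] at hm
          have hmi : m ≤ i := le_trans hm (min_le_left _ _)
          have hmj : m ≤ j := le_trans hm (min_le_right _ _)
          have e1 : |g i m * g j m * σ ^ 2| = |g i m| * |g j m| * σ ^ 2 := by
            rw [abs_mul, abs_mul, abs_of_nonneg hσ]
          rw [e1]
          have h5 : |g i m| * |g j m| * σ ^ 2
              ≤ (M * a ^ (i - m)) * (M * a ^ (j - m)) * σ ^ 2 := by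
            apply mul_le_mul_of_nonneg_right _ hσ
            exact mul_le_mul (hg m i hmi) (hg m j hmj) (abs_nonneg _)
              (le_of_lt (by positivity))
          refine h5.trans (le_of_eq ?_)
          have e2 : (i - m) + (j - m) = Nat.dist i j + 2 * (N - m) := by
            rw [Nat.dist]; omega
          have : a ^ (i - m) * a ^ (j - m) = a ^ Nat.dist i j * (a ^ 2) ^ (N - m) := by
            rw [← pow_add, e2, pow_add, ← pow_mul, mul_comm 2 (N - m), pow_mul]
          linear_combination σ ^ 2 * M ^ 2 * this
      _ = σ ^ 2 * M ^ 2 * a ^ Nat.dist i j *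
            ∑ m ∈ range (N + 1), (a ^ 2) ^ (N - m) := by
          rw [Finset.mul_sum]
      _ ≤ σ ^ 2 * M ^ 2 * a ^ Nat.dist i j * (1 / (1 - a ^ 2)) := by
          apply mul_le_mul_of_nonneg_left _ (by positivity)
          have hre : ∑ m ∈ range (N + 1), (a ^ 2) ^ (N - m)
              = ∑ t ∈ range (N + 1), (a ^ 2) ^ t := by
            rw [← Finset.sum_range_reflect]
            apply Finset.sum_congr rfl
            intro x hx
            rw [Finset.mem_range, Nat.lt_succ_iff] at hx
            congr 1
            omega
          rw [hre, le_div_iff₀ ha2']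
          have := geom_sum_mul (a ^ 2) (N + 1)
          have hp : (0:ℝ) ≤ (a ^ 2) ^ (N + 1) := by positivity
          nlinarith [this]
      _ = σ ^ 2 * M ^ 2 / (1 - a ^ 2) * a ^ Nat.dist i j := by
          ring
  refine ⟨by rw [hymean i, hymean j]; ring_nf, hbound⟩
end
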